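/- arXiv:1311.2815 — 5 statements merged into one kernel-verified Lean document; each statement's English description precedes it below -/
import Mathlib

section
/- Let Jf : ℝⁿ ⇉ L(ℝⁿ, ℝⁿ) be a set-valued map with nonempty values which is upper semicontinuous at x (for every ε > 0 there is δ > 0 with Jf(x + δ𝐁ₙ) ⊆ Jf(x) + ε𝐁_{n×n}). Then sup_{β>0} α_{Jf}(x, β) = lim_{β→0⁺} α_{Jf}(x, β) = α_{Jf}(x), where α_{Jf}(x, β) = inf{//A// : A ∈ co(Jf(x + β𝐁ₙ))} and α_{Jf}(x) = inf{//A// : A ∈ co(Jf(x))}. -/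
open Pointwise
noncomputable def conorm {n : ℕ}
    (A : EuclideanSpace ℝ (Fin n) →L[ℝ] EuclideanSpace ℝ (Fin n)) : ℝ :=
  sInf ((fun u => ‖A u‖) '' {u | ‖u‖ = 1})

noncomputable def regIndex {n : ℕ}
    (Jf : EuclideanSpace ℝ (Fin n) →
      Set (EuclideanSpace ℝ (Fin n) →L[ℝ] EuclideanSpace ℝ (Fin n)))
    (x : EuclideanSpace ℝ (Fin n)) : ℝ :=
  sInf (conorm '' (convexHull ℝ (Jf x)))

noncomputable def regIndexBall {n : ℕ}
    (Jf : EuclideanSpace ℝ (Fin n) →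
      Set (EuclideanSpace ℝ (Fin n) →L[ℝ] EuclideanSpace ℝ (Fin n)))
    (x : EuclideanSpace ℝ (Fin n)) (β : ℝ) : ℝ :=
  sInf (conorm '' (convexHull ℝ (⋃ y ∈ Metric.ball x β, Jf y)))

/-- Upper semicontinuity of the set-valued map `Jf` at `x`. -/
def UscAt {n : ℕ}
    (Jf : EuclideanSpace ℝ (Fin n) →
      Set (EuclideanSpace ℝ (Fin n) →L[ℝ] EuclideanSpace ℝ (Fin n)))
    (x : EuclideanSpace ℝ (Fin n)) : Prop :=
  ∀ ε > (0 : ℝ), ∃ δ > (0 : ℝ),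
    (⋃ y ∈ Metric.ball x δ, Jf y) ⊆ Jf x + Metric.ball (0 : EuclideanSpace ℝ (Fin n) →L[ℝ] EuclideanSpace ℝ (Fin n)) ε

section Aux

variable {n : ℕ}

lemma conorm_nonneg (A : EuclideanSpace ℝ (Fin n) →L[ℝ] EuclideanSpace ℝ (Fin n)) :
    0 ≤ conorm A := by
  apply Real.sInf_nonneg
  rintro r ⟨u, -, rfl⟩
  positivity

lemma conorm_le_add (A B : EuclideanSpace ℝ (Fin n) →L[ℝ] EuclideanSpace ℝ (Fin n)) :
    conorm B ≤ conorm A + ‖A - B‖ := by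
  rcases Set.eq_empty_or_nonempty {u : EuclideanSpace ℝ (Fin n) | ‖u‖ = 1} with h | h
  · simp only [conorm, h, Set.image_empty, Real.sInf_empty]
    positivity
  · rw [← sub_le_iff_le_add]
    apply le_csInf (h.image _)
    rintro r ⟨u, hu, rfl⟩
    rw [sub_le_iff_le_add]
    have h1 : conorm B ≤ ‖B u‖ := by
      refine csInf_le ⟨0, ?_⟩ ⟨u, hu, rfl⟩
      rintro r ⟨v, -, rfl⟩
      positivity
    have h2 : ‖B u‖ ≤ ‖A u‖ + ‖A - B‖ := by
      have : ‖B u‖ - ‖A u‖ ≤ ‖A u - B u‖ := by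
        rw [norm_sub_rev]
        exact norm_sub_norm_le _ _
      have h3 : ‖A u - B u‖ ≤ ‖A - B‖ * ‖u‖ := (A - B).le_opNorm u
      rw [Set.mem_setOf_eq] at hu
      rw [hu, mul_one] at h3
      linarith
    linarith

variable (Jf : EuclideanSpace ℝ (Fin n) →
      Set (EuclideanSpace ℝ (Fin n) →L[ℝ] EuclideanSpace ℝ (Fin n)))
    (x : EuclideanSpace ℝ (Fin n))

lemma bddBelow_conorm_image (s : Set (EuclideanSpace ℝ (Fin n) →L[ℝ] EuclideanSpace ℝ (Fin n))) :
    BddBelow (conorm '' s) :=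
  ⟨0, by rintro r ⟨A, -, rfl⟩; exact conorm_nonneg A⟩

lemma regIndex_nonneg : 0 ≤ regIndex Jf x :=
  Real.sInf_nonneg (by rintro r ⟨A, -, rfl⟩; exact conorm_nonneg A)

lemma regIndexBall_le (hJ : ∀ y, (Jf y).Nonempty) {β : ℝ} (hβ : 0 < β) :
    regIndexBall Jf x β ≤ regIndex Jf x := by
  apply csInf_le_csInf (bddBelow_conorm_image _)
    (((hJ x).mono (subset_convexHull ℝ _)).image _)
  apply Set.image_mono
  apply convexHull_mono
  exact fun A hA => Set.mem_biUnion (Metric.mem_ball_self hβ) hA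

lemma regIndexBall_anti (hJ : ∀ y, (Jf y).Nonempty) {β₁ β₂ : ℝ} (h1 : 0 < β₁) (h12 : β₁ ≤ β₂) :
    regIndexBall Jf x β₂ ≤ regIndexBall Jf x β₁ := by
  have hne : (⋃ y ∈ Metric.ball x β₁, Jf y).Nonempty :=
    ⟨(hJ x).some, Set.mem_biUnion (Metric.mem_ball_self h1) (hJ x).some_mem⟩
  apply csInf_le_csInf (bddBelow_conorm_image _)
    ((hne.mono (subset_convexHull ℝ _)).image _)
  apply Set.image_mono
  apply convexHull_mono
  exact Set.biUnion_mono (Metric.ball_subset_ball h12) (fun _ _ => subset_rfl)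

lemma key (hJ : ∀ y, (Jf y).Nonempty) (husc : UscAt Jf x) {ε : ℝ} (hε : 0 < ε) :
    ∃ δ > (0 : ℝ), regIndex Jf x - ε ≤ regIndexBall Jf x δ := by
  obtain ⟨δ, hδ, hsub⟩ := husc ε hε
  refine ⟨δ, hδ, ?_⟩
  have hsub2 : convexHull ℝ (⋃ y ∈ Metric.ball x δ, Jf y) ⊆
      convexHull ℝ (Jf x) + Metric.ball (0 : EuclideanSpace ℝ (Fin n) →L[ℝ] EuclideanSpace ℝ (Fin n)) ε := by
    calc convexHull ℝ (⋃ y ∈ Metric.ball x δ, Jf y)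
        ⊆ convexHull ℝ (Jf x + Metric.ball 0 ε) := convexHull_mono hsub
      _ = convexHull ℝ (Jf x) + convexHull ℝ (Metric.ball 0 ε) := by rw [convexHull_add]
      _ = convexHull ℝ (Jf x) + Metric.ball 0 ε := by
          rw [(convex_ball _ _).convexHull_eq]
  have hne : (⋃ y ∈ Metric.ball x δ, Jf y).Nonempty :=
    ⟨(hJ x).some, Set.mem_biUnion (Metric.mem_ball_self hδ) (hJ x).some_mem⟩
  apply le_csInf ((hne.mono (subset_convexHull ℝ _)).image _)
  rintro r ⟨A, hA, rfl⟩
  obtain ⟨B, hB, C, hC, hBC⟩ := Set.mem_add.mp (hsub2 hA)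
  have h1 : regIndex Jf x ≤ conorm B := csInf_le (bddBelow_conorm_image _) ⟨B, hB, rfl⟩
  have h2 : conorm B ≤ conorm A + ‖A - B‖ := conorm_le_add _ _
  have h3 : ‖A - B‖ = ‖C‖ := by rw [← hBC, add_sub_cancel_left]
  have h4 : ‖C‖ < ε := mem_ball_zero_iff.mp hC
  linarith

end Aux

theorem regIndexBall_tendsto_regIndex {n : ℕ}
    (Jf : EuclideanSpace ℝ (Fin n) →
      Set (EuclideanSpace ℝ (Fin n) →L[ℝ] EuclideanSpace ℝ (Fin n)))
    (hJ : ∀ y, (Jf y).Nonempty) (x : EuclideanSpace ℝ (Fin n))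
    (husc : UscAt Jf x) :
    (⨆ β > (0 : ℝ), regIndexBall Jf x β) = regIndex Jf x ∧
    Filter.Tendsto (fun β => regIndexBall Jf x β) (nhdsWithin 0 (Set.Ioi 0))
      (nhds (regIndex Jf x)) := by
  have hub : ∀ β : ℝ, (⨆ _ : β > (0 : ℝ), regIndexBall Jf x β) ≤ regIndex Jf x := by
    intro β
    apply Real.iSup_le _ (regIndex_nonneg Jf x)
    intro hβ
    exact regIndexBall_le Jf x hJ hβ
  constructor
  · apply le_antisymm
    · exact Real.iSup_le hub (regIndex_nonneg Jf x)
    · apply le_of_forall_pos_le_add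
      intro ε hε
      obtain ⟨δ, hδ, hkey⟩ := key Jf x hJ husc hε
      have h1 : regIndexBall Jf x δ ≤ ⨆ β > (0 : ℝ), regIndexBall Jf x β := by
        have h2 := le_ciSup (f := fun β : ℝ => ⨆ _ : β > (0 : ℝ), regIndexBall Jf x β)
          ⟨regIndex Jf x, by rintro r ⟨β, rfl⟩; exact hub β⟩ δ
        rwa [ciSup_pos hδ] at h2
      linarith
  · rw [Metric.tendsto_nhdsWithin_nhds]
    intro ε hε
    obtain ⟨δ, hδ, hkey⟩ := key Jf x hJ husc (half_pos hε)
    refine ⟨δ, hδ, ?_⟩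
    intro β hβ hd
    rw [Set.mem_Ioi] at hβ
    rw [Real.dist_eq] at hd ⊢
    rw [sub_zero, abs_of_pos hβ] at hd
    have h1 : regIndexBall Jf x δ ≤ regIndexBall Jf x β :=
      regIndexBall_anti Jf x hJ hβ hd.le
    have h2 : regIndexBall Jf x β ≤ regIndex Jf x := regIndexBall_le Jf x hJ hβ
    rw [abs_lt]
    constructor <;> linarith
end

section
/- Let f : ℝⁿ → ℝⁿ be continuous with a pseudo-Jacobian map Jf that is upper semicontinuous at x, and suppose α_{Jf}(x) > 0. Then the lower scalar Dini derivative satisfies D⁻ₓf := liminf_{y→x, y≠x} ‖f(y) − f(x)‖/‖y − x‖ ≥ α_{Jf}(x). -/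
open Pointwise

def IsPseudoJacobian {n m : ℕ}
    (f : EuclideanSpace ℝ (Fin n) → EuclideanSpace ℝ (Fin m))
    (J : Set (EuclideanSpace ℝ (Fin n) →L[ℝ] EuclideanSpace ℝ (Fin m)))
    (x : EuclideanSpace ℝ (Fin n)) : Prop :=
  J.Nonempty ∧ IsClosed J ∧
    ∀ (u : EuclideanSpace ℝ (Fin n)) (v : EuclideanSpace ℝ (Fin m)),
      Filter.limsup
        (fun t : ℝ =>
          ((((inner ℝ v (f (x + t • u)) : ℝ) - (inner ℝ v (f x) : ℝ)) / t : ℝ) : EReal))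
        (nhdsWithin 0 (Set.Ioi 0))
      ≤ ⨆ M ∈ J, ((inner ℝ v (M u) : ℝ) : EReal)

/-- The lower scalar Dini derivative of `f` at `x`, with values in `EReal`. -/
noncomputable def lowerDini {E F : Type*} [NormedAddCommGroup E] [NormedAddCommGroup F]
    (f : E → F) (x : E) : EReal :=
  Filter.liminf (fun y => ((‖f y - f x‖ / ‖y - x‖ : ℝ) : EReal)) (nhdsWithin x {x}ᶜ)

/-- Auxiliary scalar fencing lemma: if the right upper Dini derivative of a continuous
function is bounded by `c` on `[0, T)`, then `g T ≤ g 0 + c * T`. -/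
lemma dini_scalar_le {g : ℝ → ℝ} {T c : ℝ} (hT : 0 < T)
    (hg : ContinuousOn g (Set.Icc 0 T))
    (hd : ∀ t ∈ Set.Ico 0 T,
      Filter.limsup (fun s : ℝ => (((g (t + s) - g t) / s : ℝ) : EReal))
        (nhdsWithin 0 (Set.Ioi 0)) ≤ ((c : ℝ) : EReal)) :
    g T ≤ g 0 + c * T := by
  have key := image_le_of_liminf_slope_right_le_deriv_boundary (f := g)
    (B := fun z => g 0 + c * z) (B' := fun _ => c) (a := 0) (b := T) hg
    (by simp)
    (by exact continuousOn_const.add (continuousOn_const.mul continuousOn_id))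
    (fun t _ => by
      simpa using ((hasDerivWithinAt_id t (Set.Ici t)).const_mul c).const_add (g 0))
    ?_ (Set.right_mem_Icc.2 hT.le)
  · simpa using key
  · intro t ht r hr
    have h1 : Filter.limsup (fun s : ℝ => (((g (t + s) - g t) / s : ℝ) : EReal))
        (nhdsWithin 0 (Set.Ioi 0)) < ((r : ℝ) : EReal) :=
      lt_of_le_of_lt (hd t ht) (by exact_mod_cast hr)
    have h2 := Filter.eventually_lt_of_limsup_lt h1
    have h3 : ∀ᶠ s in nhdsWithin (0:ℝ) (Set.Ioi 0), slope g t (t + s) < r := by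
      filter_upwards [h2] with s hs
      have hs' : (g (t + s) - g t) / s < r := by exact_mod_cast hs
      rwa [slope_def_field, add_sub_cancel_left]
    have hmap : Filter.map (fun s : ℝ => t + s) (nhdsWithin (0:ℝ) (Set.Ioi 0))
        = nhdsWithin t (Set.Ioi t) := by
      have h := (Homeomorph.addLeft t).isEmbedding.map_nhdsWithin_eq (Set.Ioi (0:ℝ)) 0
      simpa [Set.image_const_add_Ioi] using h
    rw [show (nhdsWithin t (Set.Ioi t)) = Filter.map (fun s : ℝ => t + s)
      (nhdsWithin (0:ℝ) (Set.Ioi 0)) from hmap.symm, Filter.frequently_map]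
    exact h3.frequently

/-- Auxiliary separation lemma: a convex set of vectors of norm at least `α > 0`
lies in a half-space `{w | α ≤ ⟪v, w⟫}` for some unit vector `v`. -/
lemma exists_unit_sep {E : Type*} [NormedAddCommGroup E] [InnerProductSpace ℝ E] [CompleteSpace E]
    {K : Set E} (hK : Convex ℝ K) (hne : K.Nonempty) {α : ℝ} (hα : 0 < α)
    (hbd : ∀ w ∈ K, α ≤ ‖w‖) :
    ∃ v : E, ‖v‖ = 1 ∧ ∀ w ∈ K, α ≤ (inner ℝ v w : ℝ) := by
  set Kc := closure K with hKc
  have hKcconv : Convex ℝ Kc := hK.closure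
  have hKcne : Kc.Nonempty := hne.closure
  obtain ⟨p, hpK, hpmin⟩ := exists_norm_eq_iInf_of_complete_convex hKcne
    isClosed_closure.isComplete hKcconv 0
  have char := (norm_eq_iInf_iff_real_inner_le_zero hKcconv hpK).1 hpmin
  have hpnorm : α ≤ ‖p‖ := by
    have hsub : Kc ⊆ {w : E | α ≤ ‖w‖} :=
      closure_minimal hbd (isClosed_le continuous_const continuous_norm)
    exact hsub hpK
  have hp0 : ‖p‖ ≠ 0 := by intro h; rw [h] at hpnorm; linarith
  refine ⟨‖p‖⁻¹ • p, ?_, ?_⟩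
  · rw [norm_smul, Real.norm_eq_abs, abs_inv, abs_norm, inv_mul_cancel₀ hp0]
  · intro w hw
    have hc := char w (subset_closure hw)
    have h1 : ‖p‖ ^ 2 ≤ (inner ℝ p w : ℝ) := by
      have : (inner ℝ (0 - p) (w - p) : ℝ) ≤ 0 := hc
      rw [zero_sub, inner_neg_left, inner_sub_right, real_inner_self_eq_norm_sq] at this
      linarith
    have h2 : (inner ℝ (‖p‖⁻¹ • p) w : ℝ) = ‖p‖⁻¹ * (inner ℝ p w : ℝ) := real_inner_smul_left p w _
    rw [h2]
    calc α ≤ ‖p‖ := hpnorm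
      _ = ‖p‖⁻¹ * ‖p‖ ^ 2 := by field_simp [sq]
      _ ≤ ‖p‖⁻¹ * (inner ℝ p w : ℝ) := by
          apply mul_le_mul_of_nonneg_left h1 (by rw [inv_nonneg]; positivity)

theorem lowerDini_ge_regIndex {n : ℕ}
    (f : EuclideanSpace ℝ (Fin n) → EuclideanSpace ℝ (Fin n)) (hf : Continuous f)
    (Jf : EuclideanSpace ℝ (Fin n) →
      Set (EuclideanSpace ℝ (Fin n) →L[ℝ] EuclideanSpace ℝ (Fin n)))
    (hJf : ∀ y, IsPseudoJacobian f (Jf y) y)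
    (x : EuclideanSpace ℝ (Fin n)) (husc : UscAt Jf x)
    (hreg : 0 < regIndex Jf x) :
    (regIndex Jf x : EReal) ≤ lowerDini f x := by
  set α := regIndex Jf x with hα_def
  have hconorm_nonneg : ∀ A : (EuclideanSpace ℝ (Fin n) →L[ℝ] EuclideanSpace ℝ (Fin n)),
      0 ≤ conorm A := by
    intro A
    apply Real.sInf_nonneg
    rintro r ⟨w, hw, rfl⟩
    positivity
  have hα : ∀ A ∈ convexHull ℝ (Jf x), ∀ u : EuclideanSpace ℝ (Fin n), ‖u‖ = 1 → α ≤ ‖A u‖ := by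
    intro A hA u hu
    have h1 : α ≤ conorm A := csInf_le
      ⟨0, by rintro r ⟨B, hB, rfl⟩; exact hconorm_nonneg B⟩ (Set.mem_image_of_mem _ hA)
    have h2 : conorm A ≤ ‖A u‖ := csInf_le
      ⟨0, by rintro r ⟨w, hw, rfl⟩; positivity⟩ ⟨u, hu, rfl⟩
    linarith
  have main : ∀ ε : ℝ, 0 < ε → ((α - ε : ℝ) : EReal) ≤ lowerDini f x := by
    intro ε hε
    obtain ⟨δ, hδ0, hδ⟩ := husc ε hε
    refine Filter.le_liminf_of_le (by isBoundedDefault) ?_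
    have hball : Metric.ball x δ ∈ nhdsWithin x ({x}ᶜ) :=
      nhdsWithin_le_nhds (Metric.ball_mem_nhds x hδ0)
    filter_upwards [hball, self_mem_nhdsWithin] with y hy hyx
    have hyx' : y ≠ x := hyx
    set T := ‖y - x‖ with hT_def
    have hT : 0 < T := norm_pos_iff.2 (sub_ne_zero.2 hyx')
    have hTδ : T < δ := by
      rw [hT_def, ← dist_eq_norm]
      exact Metric.mem_ball.1 hy
    set u := T⁻¹ • (y - x) with hu_def
    have hu : ‖u‖ = 1 := by
      rw [hu_def, norm_smul, Real.norm_eq_abs, abs_inv, abs_norm]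
      exact inv_mul_cancel₀ hT.ne'
    have hxTu : x + T • u = y := by
      rw [hu_def, smul_smul, mul_inv_cancel₀ hT.ne', one_smul, add_sub_cancel]
    -- the separating unit vector
    set appLM : (EuclideanSpace ℝ (Fin n) →L[ℝ] EuclideanSpace ℝ (Fin n)) →ₗ[ℝ]
        EuclideanSpace ℝ (Fin n) :=
      { toFun := fun A => A u, map_add' := fun a b => rfl, map_smul' := fun c a => rfl }
    obtain ⟨A₀, hA₀⟩ := (hJf x).1
    obtain ⟨v, hvnorm, hv⟩ := exists_unit_sep (K := appLM '' convexHull ℝ (Jf x))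
      ((convex_convexHull ℝ (Jf x)).linear_image appLM)
      ⟨A₀ u, ⟨A₀, subset_convexHull ℝ _ hA₀, rfl⟩⟩ hreg
      (by rintro w ⟨A, hA, rfl⟩; exact hα A hA u hu)
    have key : ∀ M ∈ Jf x + Metric.ball
        (0 : EuclideanSpace ℝ (Fin n) →L[ℝ] EuclideanSpace ℝ (Fin n)) ε,
        (inner ℝ (-v) (M u) : ℝ) ≤ ε - α := by
      intro M hM
      obtain ⟨A, hA, Emat, hE, rfl⟩ := Set.mem_add.1 hM
      have h1 : α ≤ (inner ℝ v (A u) : ℝ) := hv _ ⟨A, subset_convexHull ℝ _ hA, rfl⟩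
      have h2 : ‖Emat‖ < ε := mem_ball_zero_iff.1 hE
      have h3 : |(inner ℝ v (Emat u) : ℝ)| ≤ ‖Emat‖ := by
        calc |(inner ℝ v (Emat u) : ℝ)| ≤ ‖v‖ * ‖Emat u‖ := abs_real_inner_le_norm v _
          _ = ‖Emat u‖ := by rw [hvnorm, one_mul]
          _ ≤ ‖Emat‖ * ‖u‖ := Emat.le_opNorm u
          _ = ‖Emat‖ := by rw [hu, mul_one]
      have habs := abs_le.1 h3
      have hadd : ((A + Emat) u) = A u + Emat u := rfl
      rw [hadd, inner_neg_left, inner_add_right]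
      push_cast
      linarith [habs.1, habs.2]
    set g : ℝ → ℝ := fun r => (inner ℝ (-v) (f (x + r • u)) : ℝ) with hg_def
    have hgc : ContinuousOn g (Set.Icc 0 T) :=
      (Continuous.inner continuous_const
        (hf.comp (continuous_const.add (continuous_id.smul continuous_const)))).continuousOn
    have hd : ∀ t ∈ Set.Ico 0 T,
        Filter.limsup (fun s : ℝ => (((g (t + s) - g t) / s : ℝ) : EReal))
          (nhdsWithin 0 (Set.Ioi 0)) ≤ ((ε - α : ℝ) : EReal) := by
      intro t ht
      have hz : x + t • u ∈ Metric.ball x δ := by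
        rw [Metric.mem_ball, dist_eq_norm, add_sub_cancel_left, norm_smul, Real.norm_eq_abs,
          abs_of_nonneg ht.1, hu, mul_one]
        exact ht.2.trans hTδ
      have hq := (hJf (x + t • u)).2.2 u (-v)
      have hfun : (fun s : ℝ =>
          ((((inner ℝ (-v) (f (x + t • u + s • u)) : ℝ) - (inner ℝ (-v) (f (x + t • u)) : ℝ))
            / s : ℝ) : EReal))
          = fun s : ℝ => (((g (t + s) - g t) / s : ℝ) : EReal) := by
        funext s
        have hpt : x + (t + s) • u = x + t • u + s • u := by
          rw [add_smul, add_assoc]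
        simp only [hg_def, hpt]
      rw [hfun] at hq
      refine hq.trans ?_
      apply iSup₂_le
      intro M hM
      have hM' : M ∈ Jf x + Metric.ball
          (0 : EuclideanSpace ℝ (Fin n) →L[ℝ] EuclideanSpace ℝ (Fin n)) ε :=
        hδ (Set.mem_biUnion hz hM)
      exact EReal.coe_le_coe_iff.2 (key M hM')
    have hgT := dini_scalar_le hT hgc hd
    have e1 : g T = (inner ℝ (-v) (f y) : ℝ) := by rw [hg_def]; simp only [hxTu]
    have e2 : g 0 = (inner ℝ (-v) (f x) : ℝ) := by rw [hg_def]; simp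
    rw [e1, e2] at hgT
    rw [inner_neg_left, inner_neg_left] at hgT
    have hin : (α - ε) * T ≤ (inner ℝ v (f y - f x) : ℝ) := by
      rw [inner_sub_right]
      nlinarith [hgT]
    have hnorm : (inner ℝ v (f y - f x) : ℝ) ≤ ‖f y - f x‖ := by
      calc (inner ℝ v (f y - f x) : ℝ) ≤ ‖v‖ * ‖f y - f x‖ := real_inner_le_norm _ _
        _ = ‖f y - f x‖ := by rw [hvnorm, one_mul]
    show ((α - ε : ℝ) : EReal) ≤ ((‖f y - f x‖ / ‖y - x‖ : ℝ) : EReal)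
    apply EReal.coe_le_coe_iff.2
    rw [← hT_def, le_div_iff₀ hT]
    linarith
  by_contra hcon
  push_neg at hcon
  obtain ⟨b, hb1, hb2⟩ := EReal.lt_iff_exists_real_btwn.1 hcon
  have hbα : b < α := by exact_mod_cast hb2
  have := main (α - b) (by linarith)
  rw [show α - (α - b) = b by ring] at this
  exact absurd hb1 (not_lt.2 this)
end

section
/- Let E, F be Banach spaces, U ⊆ E open, f : U → F continuous, and q : [a,b] → U a continuous path with q(a) ≠ q(b) such that p = f ∘ q is rectifiable. Then there exists τ ∈ [a,b] with ℓ(p) ≥ D⁻_{q(τ)}f · ‖q(b) − q(a)‖, where ℓ(p) is the length of p and D⁻ₓf = liminf_{y→x} ‖f(y) − f(x)‖/‖y − x‖ is the lower scalar Dini derivative. -/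
theorem mean_value_inequality_length
    {E F : Type*} [NormedAddCommGroup E] [NormedSpace ℝ E] [CompleteSpace E]
    [NormedAddCommGroup F] [NormedSpace ℝ F] [CompleteSpace F]
    (U : Set E) (hU : IsOpen U) (f : E → F) (hf : ContinuousOn f U)
    (a b : ℝ) (hab : a ≤ b) (q : ℝ → E) (hq : ContinuousOn q (Set.Icc a b))
    (hqU : ∀ t ∈ Set.Icc a b, q t ∈ U) (hne : q a ≠ q b)
    (hrect : eVariationOn (f ∘ q) (Set.Icc a b) ≠ ⊤) :
    ∃ τ ∈ Set.Icc a b,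
      lowerDini f (q τ) * ((‖q b - q a‖ : ℝ) : EReal)
        ≤ (((eVariationOn (f ∘ q) (Set.Icc a b)).toReal : ℝ) : EReal) := by
  by_contra hcon
  push_neg at hcon
  set ℓ : ℝ := (eVariationOn (f ∘ q) (Set.Icc a b)).toReal with hℓ
  set n : ℝ := ‖q b - q a‖ with hn
  have hnpos : 0 < n := by
    rw [hn, norm_pos_iff, sub_ne_zero]
    exact hne.symm
  have hℓ0 : 0 ≤ ℓ := ENNReal.toReal_nonneg
  set c : ℝ := ℓ / n with hcdef
  have hc0 : 0 ≤ c := div_nonneg hℓ0 hnpos.le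
  -- step 1 : at every point of the path, the Dini derivative exceeds c
  have hc : ∀ τ ∈ Set.Icc a b, (c : EReal) < lowerDini f (q τ) := by
    intro τ hτ
    by_contra hle
    push_neg at hle
    have : lowerDini f (q τ) * ((n : ℝ) : EReal) ≤ ((ℓ : ℝ) : EReal) := by
      rw [← EReal.le_div_iff_mul_le (by exact_mod_cast hnpos) (EReal.coe_ne_top n)]
      rwa [hcdef, EReal.coe_div] at hle
    exact absurd this (not_le.mpr (hcon τ hτ))
  -- step 2 : local estimates
  have key : ∀ τ ∈ Set.Icc a b, ∃ δ > 0, ∀ u ∈ Set.Icc a b, |u - τ| < δ →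
      c * ‖q u - q τ‖ ≤ ‖f (q u) - f (q τ)‖ ∧
        (q u ≠ q τ → c * ‖q u - q τ‖ < ‖f (q u) - f (q τ)‖) := by
    intro τ hτ
    have hev : ∀ᶠ y in nhdsWithin (q τ) {q τ}ᶜ,
        (c : EReal) < ((‖f y - f (q τ)‖ / ‖y - q τ‖ : ℝ) : EReal) :=
      Filter.eventually_lt_of_lt_liminf (hc τ hτ)
    rw [Filter.eventually_iff, Metric.mem_nhdsWithin_iff] at hev
    obtain ⟨ε, hε, hball⟩ := hev
    have hqc : ContinuousWithinAt q (Set.Icc a b) τ := hq.continuousWithinAt hτ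
    rw [Metric.continuousWithinAt_iff] at hqc
    obtain ⟨δ, hδ, hδq⟩ := hqc ε hε
    refine ⟨δ, hδ, fun u hu huδ => ?_⟩
    have hdq : dist (q u) (q τ) < ε := hδq hu (by rwa [Real.dist_eq])
    by_cases hqq : q u = q τ
    · constructor
      · simp [hqq]
      · intro h; exact absurd hqq h
    · have hy : q u ∈ Metric.ball (q τ) ε ∩ {q τ}ᶜ := ⟨hdq, hqq⟩
      have := hball hy
      simp only [Set.mem_setOf_eq, EReal.coe_lt_coe_iff] at this
      have hnorm : 0 < ‖q u - q τ‖ := by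
        rw [norm_pos_iff, sub_ne_zero]; exact hqq
      have hstrict : c * ‖q u - q τ‖ < ‖f (q u) - f (q τ)‖ :=
        (lt_div_iff₀ hnorm).mp this
      exact ⟨hstrict.le, fun _ => hstrict⟩
  -- variation bookkeeping
  have hBV : LocallyBoundedVariationOn (f ∘ q) (Set.Icc a b) :=
    BoundedVariationOn.locallyBoundedVariationOn hrect
  set V : ℝ → ℝ := fun t => variationOnFromTo (f ∘ q) (Set.Icc a b) a t with hV
  have haI : a ∈ Set.Icc a b := Set.left_mem_Icc.mpr hab
  have hVa : V a = 0 := variationOnFromTo.self _ _ _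
  have hVb : V b = ℓ := by
    rw [hV, hℓ]
    simp only
    rw [variationOnFromTo.eq_of_le _ _ hab, Set.inter_self]
  have hdist : ∀ t ∈ Set.Icc a b, ∀ u ∈ Set.Icc a b, t ≤ u →
      V t + ‖f (q u) - f (q t)‖ ≤ V u := by
    intro t ht u hu htu
    have hadd : V t + variationOnFromTo (f ∘ q) (Set.Icc a b) t u = V u :=
      variationOnFromTo.add hBV haI ht hu
    have hle : ‖f (q u) - f (q t)‖ ≤ variationOnFromTo (f ∘ q) (Set.Icc a b) t u := by
      rw [variationOnFromTo.eq_of_le _ _ htu]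
      have h1 : edist ((f ∘ q) t) ((f ∘ q) u) ≤
          eVariationOn (f ∘ q) (Set.Icc a b ∩ Set.Icc t u) :=
        eVariationOn.edist_le _ ⟨ht, le_refl t, htu⟩ ⟨hu, htu, le_refl u⟩
      have hfin : eVariationOn (f ∘ q) (Set.Icc a b ∩ Set.Icc t u) ≠ ⊤ :=
        fun htop => hrect (top_le_iff.mp (htop ▸ eVariationOn.mono _ Set.inter_subset_left))
      calc ‖f (q u) - f (q t)‖ = dist ((f ∘ q) t) ((f ∘ q) u) := by
            rw [dist_comm]; exact (dist_eq_norm _ _).symm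
        _ = (edist ((f ∘ q) t) ((f ∘ q) u)).toReal := by rw [dist_edist]
        _ ≤ _ := ENNReal.toReal_mono hfin h1
    linarith
  have hVmono : ∀ t ∈ Set.Icc a b, ∀ u ∈ Set.Icc a b, t ≤ u → V t ≤ V u := by
    intro t ht u hu htu
    have := hdist t ht u hu htu
    have := norm_nonneg (f (q u) - f (q t))
    linarith
  -- the set where the inequality holds
  set S : Set ℝ := {t | t ∈ Set.Icc a b ∧ c * ‖q t - q a‖ ≤ V t ∧
      (q t ≠ q a → c * ‖q t - q a‖ < V t)} with hS
  have hSa : a ∈ S := by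
    refine ⟨haI, ?_, fun h => absurd rfl h⟩
    simp [hVa]
  have hSne : S.Nonempty := ⟨a, hSa⟩
  have hSbdd : BddAbove S := ⟨b, fun x hx => hx.1.2⟩
  -- propagation lemma
  have chain : ∀ t ∈ S, ∀ u ∈ Set.Icc a b, t ≤ u →
      c * ‖q u - q t‖ ≤ ‖f (q u) - f (q t)‖ →
      (q u ≠ q t → c * ‖q u - q t‖ < ‖f (q u) - f (q t)‖) → u ∈ S := by
    intro t ht u hu htu hest hstrict
    obtain ⟨htI, htle, htlt⟩ := ht
    have hVtu := hdist t htI u hu htu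
    have htri : ‖q u - q a‖ ≤ ‖q u - q t‖ + ‖q t - q a‖ := norm_sub_le_norm_sub_add_norm_sub _ _ _
    have htri' : c * ‖q u - q a‖ ≤ c * ‖q u - q t‖ + c * ‖q t - q a‖ := by
      rw [← mul_add]
      exact mul_le_mul_of_nonneg_left htri hc0
    refine ⟨hu, by nlinarith [norm_nonneg (f (q u) - f (q t))], ?_⟩
    intro hua
    by_cases hut : q u = q t
    · have h1 := htlt (fun h => hua (hut.trans h))
      have h2 : ‖q u - q a‖ = ‖q t - q a‖ := by rw [hut]
      have := hVmono t htI u hu htu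
      linarith [h2 ▸ h1]
    · have h3 := hstrict hut
      linarith
  set T : ℝ := sSup S with hT
  have hTa : a ≤ T := le_csSup hSbdd hSa
  have hTb : T ≤ b := csSup_le hSne fun x hx => hx.1.2
  have hTI : T ∈ Set.Icc a b := ⟨hTa, hTb⟩
  obtain ⟨δ, hδ, hkey⟩ := key T hTI
  -- T belongs to S
  have hTS : T ∈ S := by
    obtain ⟨s, hsS, hs⟩ := exists_lt_of_lt_csSup hSne (show T - δ < T by linarith)
    have hsT : s ≤ T := le_csSup hSbdd hsS
    have hsδ : |s - T| < δ := by rw [abs_sub_lt_iff]; constructor <;> linarith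
    obtain ⟨h1, h2⟩ := hkey s hsS.1 hsδ
    have h1' : c * ‖q T - q s‖ ≤ ‖f (q T) - f (q s)‖ := by
      rwa [norm_sub_rev (q T) (q s), norm_sub_rev (f (q T)) (f (q s))]
    have h2' : q T ≠ q s → c * ‖q T - q s‖ < ‖f (q T) - f (q s)‖ := by
      intro h
      rw [norm_sub_rev (q T) (q s), norm_sub_rev (f (q T)) (f (q s))]
      exact h2 (Ne.symm h)
    exact chain s hsS T hTI hsT h1' h2'
  -- T must equal b
  have hTeq : T = b := by
    by_contra hne'
    have hTlt : T < b := lt_of_le_of_ne hTb hne'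
    set u : ℝ := min b (T + δ / 2) with hu
    have huT : T < u := by
      rw [hu]; exact lt_min hTlt (by linarith)
    have hub : u ≤ b := min_le_left _ _
    have huI : u ∈ Set.Icc a b := ⟨le_trans hTa huT.le, hub⟩
    have huδ : |u - T| < δ := by
      rw [abs_sub_lt_iff]
      constructor
      · have : u ≤ T + δ / 2 := min_le_right _ _
        linarith
      · linarith
    obtain ⟨h1, h2⟩ := hkey u huI huδ
    have : u ∈ S := chain T hTS u huI huT.le h1 h2
    exact absurd (le_csSup hSbdd this) (not_le.mpr huT)
  -- conclusion
  have hbS : b ∈ S := hTeq ▸ hTS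
  have hfinal := hbS.2.2 hne.symm
  rw [hVb] at hfinal
  have : c * n = ℓ := div_mul_cancel₀ ℓ hnpos.ne'
  rw [← hn] at hfinal
  linarith
end

section
/- Let E, F be Banach spaces and f : E → F a local homeomorphism. Suppose inf_{‖x‖ ≤ r} D⁻ₓf > 0 for every r ≥ 0, and there exists a Riemann-integrable function η : [0,∞) → (0,∞) with ∫₀^∞ η(t) dt = ∞ and 0 < η(t) ≤ inf_{‖x‖=t} D⁻ₓf for all t ≥ 0. Then f is a global homeomorphism from E onto F, and moreover ‖f(x) − f(0)‖ ≥ ∫₀^{‖x‖} η(t) dt for every x ∈ E. -/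
open Filter Set MeasureTheory Topology

section Aux
set_option linter.unusedSectionVars false
variable {E F : Type*} [NormedAddCommGroup E] [NormedSpace ℝ E]
    [NormedAddCommGroup F] [NormedSpace ℝ F]

/-- L0: from a lower bound on the lower Dini derivative, get a local expansion bound. -/
lemma lowerDini_bound {f : E → F} {x : E} {m m' : ℝ} (h : (m : EReal) ≤ lowerDini f x)
    (hm' : m' < m) : ∃ δ > 0, ∀ y : E, ‖y - x‖ < δ → m' * ‖y - x‖ ≤ ‖f y - f x‖ := by
  have h1 : ((m' : ℝ) : EReal) < Filter.liminf
      (fun y => ((‖f y - f x‖ / ‖y - x‖ : ℝ) : EReal)) (nhdsWithin x {x}ᶜ) :=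
    lt_of_lt_of_le (by exact_mod_cast hm') h
  have h2 := Filter.eventually_lt_of_lt_liminf h1
  rw [Filter.Eventually, Metric.mem_nhdsWithin_iff] at h2
  obtain ⟨δ, hδ, h3⟩ := h2
  refine ⟨δ, hδ, fun y hy => ?_⟩
  rcases eq_or_ne y x with rfl | hne
  · simp
  · have hy' : y ∈ ({x}ᶜ : Set E) := by simpa using hne
    have := h3 ⟨by simpa [Metric.mem_ball, dist_eq_norm] using hy, hy'⟩
    have h4 : m' < ‖f y - f x‖ / ‖y - x‖ := by exact_mod_cast this
    have hpos : 0 < ‖y - x‖ := by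
      simpa [norm_pos_iff, sub_eq_zero] using hne
    calc m' * ‖y - x‖ ≤ (‖f y - f x‖ / ‖y - x‖) * ‖y - x‖ := by
          exact mul_le_mul_of_nonneg_right h4.le hpos.le
      _ = ‖f y - f x‖ := by field_simp

/-- L2: uniqueness of lifts through a local homeomorphism, on an interval. -/
lemma lift_unique {f : E → F} (hloc : IsLocalHomeomorph f) {σ : ℝ → F} {γ₁ γ₂ : ℝ → E}
    {a b : ℝ} (h₁ : ContinuousOn γ₁ (Icc a b)) (h₂ : ContinuousOn γ₂ (Icc a b))
    (hl₁ : ∀ s ∈ Icc a b, f (γ₁ s) = σ s) (hl₂ : ∀ s ∈ Icc a b, f (γ₂ s) = σ s)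
    {s₀ : ℝ} (hs₀ : s₀ ∈ Icc a b) (hstart : γ₁ s₀ = γ₂ s₀) : EqOn γ₁ γ₂ (Icc a b) :=
  (T2Space.isSeparatedMap f).eqOn_of_comp_eqOn hloc.isLocallyInjective isPreconnected_Icc
    h₁ h₂ (fun s hs => by simp only [Function.comp_apply, hl₁ s hs, hl₂ s hs]) hs₀ hstart


/-- L4: a lift of a line is Lipschitz, given a uniform local expansion bound along it. -/
lemma lift_lipschitz {f : E → F} {γ : ℝ → E} {u v : ℝ}
    (hγ : ContinuousOn γ (Icc u v)) {c w : F}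
    (hlift : ∀ s ∈ Icc u v, f (γ s) = c + s • w) {m' : ℝ} (hm' : 0 < m')
    (hb : ∀ s ∈ Icc u v, ∃ δ > 0, ∀ y : E, ‖y - γ s‖ < δ → m' * ‖y - γ s‖ ≤ ‖f y - f (γ s)‖) :
    ∀ s ∈ Icc u v, ∀ s' ∈ Icc u v, s ≤ s' → ‖γ s' - γ s‖ ≤ (‖w‖ / m') * (s' - s) := by
  intro s₀ hs₀ s' hs' hss'
  have key : ∀ x ∈ Icc s₀ v, ‖γ x - γ s₀‖ ≤ (‖w‖ / m') * (x - s₀) := by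
    have hsub : Icc s₀ v ⊆ Icc u v := Icc_subset_Icc hs₀.1 le_rfl
    refine image_le_of_liminf_slope_right_le_deriv_boundary
      (f := fun x => ‖γ x - γ s₀‖) (B := fun x => (‖w‖ / m') * (x - s₀))
      (B' := fun _ => ‖w‖ / m') ?_ ?_ ?_ ?_ ?_
    · exact (hγ.mono hsub).sub continuousOn_const |>.norm
    · simp
    · exact (continuousOn_const.mul (continuousOn_id.sub continuousOn_const))
    · intro x _
      simpa using ((hasDerivWithinAt_id x (Ici x)).sub_const s₀).const_mul (‖w‖ / m')
    · intro x hx r hr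
      obtain ⟨δ, hδ, hloc⟩ := hb x (hsub ⟨hx.1, hx.2.le⟩)
      have hcont := hγ.continuousWithinAt (hsub ⟨hx.1, hx.2.le⟩)
      obtain ⟨δ', hδ', hd⟩ := Metric.tendsto_nhdsWithin_nhds.mp hcont δ hδ
      have hxv : x < min v (x + δ') := lt_min hx.2 (by linarith)
      have hmem : Ioo x (min v (x + δ')) ∈ 𝓝[>] x := Ioo_mem_nhdsGT_of_mem ⟨le_rfl, hxv⟩
      refine Filter.Eventually.frequently (Filter.eventually_of_mem hmem fun z hz => ?_)
      have hzI : z ∈ Icc u v := ⟨(hsub ⟨hx.1, hx.2.le⟩).1.trans hz.1.le, (hz.2.trans_le (min_le_left _ _)).le⟩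
      have hdz : ‖γ z - γ x‖ < δ := by
        have := hd hzI (by rw [Real.dist_eq]; rw [abs_of_pos (by linarith [hz.1])]; linarith [hz.2.trans_le (min_le_right _ _)]
        )
        simpa [dist_eq_norm] using this
      have hexp := hloc _ hdz
      have hfz : ‖f (γ z) - f (γ x)‖ = (z - x) * ‖w‖ := by
        rw [hlift z hzI, hlift x (hsub ⟨hx.1, hx.2.le⟩)]
        rw [show c + z • w - (c + x • w) = (z - x) • w by module]
        rw [norm_smul, Real.norm_eq_abs, abs_of_pos (by linarith [hz.1])]
      have hzx : (0:ℝ) < z - x := by linarith [hz.1]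
      have hle : ‖γ z - γ x‖ ≤ (z - x) * ‖w‖ / m' := by
        rw [le_div_iff₀ hm']
        calc ‖γ z - γ x‖ * m' = m' * ‖γ z - γ x‖ := mul_comm _ _
          _ ≤ ‖f (γ z) - f (γ x)‖ := hexp
          _ = (z - x) * ‖w‖ := hfz
      have hslope : slope (fun x => ‖γ x - γ s₀‖) x z ≤ ‖w‖ / m' := by
        rw [slope_def_field]
        have h1 : ‖γ z - γ s₀‖ - ‖γ x - γ s₀‖ ≤ ‖γ z - γ x‖ := by
          have := norm_sub_norm_le (γ z - γ s₀) (γ x - γ s₀)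
          simpa [sub_sub_sub_cancel_right] using this
        rw [div_le_iff₀ hzx]
        calc ‖γ z - γ s₀‖ - ‖γ x - γ s₀‖ ≤ ‖γ z - γ x‖ := h1
          _ ≤ (z - x) * ‖w‖ / m' := hle
          _ = ‖w‖ / m' * (z - x) := by ring
      exact hslope.trans_lt hr
  exact key s' ⟨hss', hs'.2⟩

lemma phi_mono {η : ℝ → ℝ} (hint : ∀ r : ℝ, 0 ≤ r → IntervalIntegrable η volume 0 r)
    (hpos : ∀ t : ℝ, 0 ≤ t → 0 < η t) {r r' : ℝ} (h0 : 0 ≤ r) (h : r ≤ r') :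
    (∫ t in (0:ℝ)..r, η t) ≤ ∫ t in (0:ℝ)..r', η t := by
  have h0' : (0:ℝ) ≤ r' := h0.trans h
  have i1 : IntervalIntegrable η volume 0 r := hint r h0
  have i2 : IntervalIntegrable η volume r r' := by
    refine (hint r' h0').mono_set ?_
    rw [uIcc_of_le h, uIcc_of_le h0']
    exact Icc_subset_Icc h0 le_rfl
  have hadd := intervalIntegral.integral_add_adjacent_intervals i1 i2
  have hnn : 0 ≤ ∫ t in r..r', η t :=
    intervalIntegral.integral_nonneg h (fun t ht => (hpos t (h0.trans ht.1)).le)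
  linarith [hadd]


/-- Lemma M: the integral estimate along a (partial) lift of a line segment. -/
lemma estimate_along_lift {f : E → F} (hloc : IsLocalHomeomorph f)
    {η : ℝ → ℝ} (hint : ∀ r : ℝ, 0 ≤ r → IntervalIntegrable η volume 0 r)
    (hη : ∀ t : ℝ, 0 ≤ t → 0 < η t ∧ ∀ x : E, ‖x‖ = t → (η t : EReal) ≤ lowerDini f x)
    {γ : ℝ → E} {u v : ℝ} (huv : u ≤ v) (hγ : ContinuousOn γ (Icc u v))
    {c w : F} (hlift : ∀ s ∈ Icc u v, f (γ s) = c + s • w) :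
    (∫ t in (0:ℝ)..‖γ v‖, η t) ≤ (∫ t in (0:ℝ)..‖γ u‖, η t) + (v - u) * ‖w‖ := by
  have hu0 : u ∈ Icc u v := ⟨le_rfl, huv⟩
  have hv0 : v ∈ Icc u v := ⟨huv, le_rfl⟩
  set a := ‖γ u‖ with ha
  set b := ‖γ v‖ with hb
  have ha0 : 0 ≤ a := norm_nonneg _
  have hb0 : 0 ≤ b := norm_nonneg _
  have hwnn : 0 ≤ (v - u) * ‖w‖ := mul_nonneg (by linarith) (norm_nonneg _)
  rcases le_or_gt b a with hba | hab
  · have := phi_mono hint (fun t ht => (hη t ht).1) hb0 hba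
    linarith
  -- now a < b
  rcases eq_or_ne w 0 with rfl | hwne
  · exfalso
    have hconst := lift_unique hloc (σ := fun _ => c) (γ₁ := γ) (γ₂ := fun _ => γ u)
      hγ continuousOn_const (fun s hs => by simpa using hlift s hs)
      (fun _ _ => by simpa using hlift u hu0) hu0 rfl
    have : b = a := by rw [ha, hb, hconst hv0]
    linarith
  have hw0 : 0 < ‖w‖ := norm_pos_iff.2 hwne
  -- the first-hitting-time function G
  set S : ℝ → Set ℝ := fun t => {s | s ∈ Icc u v ∧ t ≤ ‖γ s‖} with hS
  have hSne : ∀ t, t ≤ b → (S t).Nonempty := fun t ht => ⟨v, hv0, ht⟩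
  have hSbd : ∀ t, BddBelow (S t) := fun t => ⟨u, fun s hs => hs.1.1⟩
  have hSsub : ∀ t, S t ⊆ Icc u v := fun t s hs => hs.1
  have hSclosed : ∀ t, IsClosed (S t) := by
    intro t
    have : S t = Icc u v ∩ (fun s => ‖γ s‖) ⁻¹' Ici t := by
      ext s; simp [hS, and_comm]
    rw [this]
    exact hγ.norm.preimage_isClosed_of_isClosed isClosed_Icc isClosed_Ici
  set G : ℝ → ℝ := fun t => if t ≤ b then sInf (S t) else v with hG
  have hGmemS : ∀ t, t ≤ b → G t ∈ S t := by
    intro t ht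
    have := (hSclosed t).csInf_mem (hSne t ht) (hSbd t)
    simpa [hG, if_pos ht] using this
  have hGmem : ∀ t, G t ∈ Icc u v := by
    intro t
    by_cases ht : t ≤ b
    · exact hSsub t (hGmemS t ht)
    · simpa [hG, if_neg ht] using hv0
  have hGa : G a = u := by
    have h1 : G a ≤ u := by
      simp only [hG]
      rw [if_pos hab.le]
      exact csInf_le (hSbd a) ⟨hu0, le_rfl⟩
    exact le_antisymm h1 (hGmem a).1
  have hGmono : Monotone G := by
    intro t t' htt'
    by_cases h1 : t' ≤ b
    · simp only [hG]
      rw [if_pos (htt'.trans h1), if_pos h1]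
      exact csInf_le_csInf (hSbd t) (hSne t' h1) (fun s hs => ⟨hs.1, htt'.trans hs.2⟩)
    · simp only [hG]
      rw [if_neg h1]
      exact (hGmem t).2
  have hGle : ∀ t, t ≤ b → ∀ s' ∈ S t, G t ≤ s' := by
    intro t ht s' hs'
    simp only [hG]
    rw [if_pos ht]
    exact csInf_le (hSbd t) hs'
  have hGlt : ∀ t, t ≤ b → ∀ s ∈ Icc u v, s < G t → ‖γ s‖ < t := by
    intro t ht s hs hslt
    by_contra hge
    push_neg at hge
    exact absurd (hGle t ht s ⟨hs, hge⟩) (not_le.2 hslt)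
  have hnormG : ∀ t, t ∈ Ioc a b → ‖γ (G t)‖ = t := by
    intro t ht
    have h1 : t ≤ ‖γ (G t)‖ := (hGmemS t ht.2).2
    have hGu : u < G t := by
      rcases eq_or_lt_of_le (hGmem t).1 with heq | h; swap; · exact h
      exfalso
      have : t ≤ a := by rw [ha, heq]; exact h1
      exact absurd this (not_le.2 ht.1)
    have hcl : G t ∈ closure (Ico u (G t)) := by
      rw [closure_Ico hGu.ne]
      exact ⟨hGu.le, le_rfl⟩
    have hne : (𝓝[Ico u (G t)] (G t)).NeBot := mem_closure_iff_nhdsWithin_neBot.mp hcl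
    have hsub2 : Ico u (G t) ⊆ Icc u v := fun s hs => ⟨hs.1, hs.2.le.trans (hGmem t).2⟩
    have hcont : ContinuousWithinAt (fun s => ‖γ s‖) (Ico u (G t)) (G t) :=
      (hγ.norm.continuousWithinAt (hGmem t)).mono hsub2
    have h2 : ‖γ (G t)‖ ≤ t :=
      le_of_tendsto hcont (eventually_of_mem self_mem_nhdsWithin
        (fun s hs => (hGlt t ht.2 s (hsub2 hs) hs.2).le))
    linarith
  -- slope bound for G
  have hslope : ∀ t, t ∈ Ioo a b → ∀ ε, 0 < ε → ε < η t → ∃ δ₁ > 0, ∀ t', t' ∈ Ioc t b →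
      min δ₁ ((t' - t) * (η t - ε) / ‖w‖) ≤ G t' - G t := by
    intro t ht ε hε hεη
    have ht0 : 0 ≤ t := ha0.trans ht.1.le
    have hsmem : G t ∈ Icc u v := hGmem t
    have hnorm : ‖γ (G t)‖ = t := hnormG t ⟨ht.1, ht.2.le⟩
    have hdini := (hη t ht0).2 (γ (G t)) hnorm
    obtain ⟨δ₀, hδ₀, hexp⟩ := lowerDini_bound hdini (show η t - ε < η t by linarith)
    obtain ⟨δ₁, hδ₁, hd⟩ := Metric.tendsto_nhdsWithin_nhds.mp (hγ.continuousWithinAt hsmem) δ₀ hδ₀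
    refine ⟨δ₁, hδ₁, fun t' ht' => ?_⟩
    have hGt' : ∀ s' ∈ S t', G t + min δ₁ ((t' - t) * (η t - ε) / ‖w‖) ≤ s' := by
      intro s' hs'
      have hs'A : G t ≤ s' := hGle t ht.2.le s' ⟨hs'.1, ht'.1.le.trans hs'.2⟩
      rcases le_or_gt δ₁ (s' - G t) with hbig | hsmall
      · have := min_le_left δ₁ ((t' - t) * (η t - ε) / ‖w‖)
        linarith
      · have hd' := hd hs'.1 (by rw [Real.dist_eq, abs_of_nonneg (by linarith)]; linarith)
        have hexp' := hexp (γ s') (by simpa [dist_eq_norm] using hd')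
        have himg : ‖f (γ s') - f (γ (G t))‖ = (s' - G t) * ‖w‖ := by
          rw [hlift s' hs'.1, hlift (G t) hsmem,
            show c + s' • w - (c + (G t) • w) = (s' - G t) • w by module,
            norm_smul, Real.norm_eq_abs, abs_of_nonneg (by linarith)]
        have h3 : t' - t ≤ ‖γ s' - γ (G t)‖ := by
          have hnsub := norm_sub_norm_le (γ s') (γ (G t))
          have : t' ≤ ‖γ s'‖ := hs'.2
          rw [hnorm] at hnsub
          linarith
        have h4 : (t' - t) * (η t - ε) ≤ (s' - G t) * ‖w‖ := by
          calc (t' - t) * (η t - ε) = (η t - ε) * (t' - t) := mul_comm _ _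
            _ ≤ (η t - ε) * ‖γ s' - γ (G t)‖ :=
                mul_le_mul_of_nonneg_left h3 (by linarith)
            _ ≤ ‖f (γ s') - f (γ (G t))‖ := hexp'
            _ = (s' - G t) * ‖w‖ := himg
        have h5 : (t' - t) * (η t - ε) / ‖w‖ ≤ s' - G t := by
          rw [div_le_iff₀ hw0]; linarith
        have := min_le_right δ₁ ((t' - t) * (η t - ε) / ‖w‖)
        linarith
    have : G t + min δ₁ ((t' - t) * (η t - ε) / ‖w‖) ≤ G t' := by
      simp only [hG]
      rw [if_pos ht'.2]
      exact le_csInf (hSne t' ht'.2) (by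
        intro s' hs'
        exact hGt' s' hs')
    linarith
  -- Fatou argument
  have hGmeas : Measurable G := hGmono.measurable
  have hGint : ∀ x y : ℝ, IntervalIntegrable G volume x y := fun x y => hGmono.intervalIntegrable
  have hGub : ∀ t, G t ≤ v := fun t => (hGmem t).2
  have hGlb : ∀ t, u ≤ G t := fun t => (hGmem t).1
  have hGiOn : IntegrableOn G (Ioo a b) :=
    ((hGmono.monotoneOn _).integrableOn_isCompact isCompact_Icc).mono_set Ioo_subset_Icc_self
  have hstep1 : ∀ n : ℕ, (∫ t in a..b, (((n:ℝ)+1) * (G (t + 1/((n:ℝ)+1)) - G t))) ≤ v - u := by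
    intro n
    set k : ℝ := (n:ℝ)+1 with hk
    have hkpos : (0:ℝ) < k := by positivity
    set h : ℝ := 1/k with hh
    have hhpos : 0 < h := by positivity
    have hGs : IntervalIntegrable (fun t => G (t + h)) volume a b :=
      (hGmono.comp (monotone_id.add_const h)).intervalIntegrable
    have heq1 : (∫ t in a..b, G (t + h)) = ∫ t in (a+h)..(b+h), G t :=
      intervalIntegral.integral_comp_add_right _ h
    have e2 : (∫ t in a..(a+h), G t) + (∫ t in (a+h)..b, G t) = ∫ t in a..b, G t :=
      intervalIntegral.integral_add_adjacent_intervals (hGint _ _) (hGint _ _)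
    have e3 : (∫ t in (a+h)..b, G t) + (∫ t in b..(b+h), G t) = ∫ t in (a+h)..(b+h), G t :=
      intervalIntegral.integral_add_adjacent_intervals (hGint _ _) (hGint _ _)
    have hub : (∫ t in b..(b+h), G t) ≤ h * v := by
      have h2 := intervalIntegral.integral_mono_on (by linarith : b ≤ b + h) (hGint _ _)
        intervalIntegrable_const (fun t _ => hGub t)
      simpa using h2
    have hlb : h * u ≤ ∫ t in a..(a+h), G t := by
      have h2 := intervalIntegral.integral_mono_on (by linarith : a ≤ a + h)
        intervalIntegrable_const (hGint _ _) (fun t _ => hGlb t)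
      simpa using h2
    have hsplit : (∫ t in a..b, (k * (G (t + h) - G t)))
        = k * ((∫ t in a..b, G (t+h)) - ∫ t in a..b, G t) := by
      rw [← intervalIntegral.integral_sub hGs (hGint _ _), ← intervalIntegral.integral_const_mul]
    rw [hsplit, heq1]
    have hkh : k * h = 1 := mul_one_div_cancel hkpos.ne'
    calc k * ((∫ t in (a+h)..(b+h), G t) - ∫ t in a..b, G t)
        = k * ((∫ t in b..(b+h), G t) - ∫ t in a..(a+h), G t) := by rw [← e3, ← e2]; ring
      _ ≤ k * (h * v - h * u) := mul_le_mul_of_nonneg_left (by linarith) hkpos.le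
      _ = v - u := by rw [mul_sub, ← mul_assoc, ← mul_assoc, hkh, one_mul, one_mul]
  have hstep2 : ∀ t, t ∈ Ioo a b → ∀ ε : ℝ, 0 < ε →
      ENNReal.ofReal ((η t - ε)/‖w‖) ≤
        liminf (fun n : ℕ => ENNReal.ofReal (((n:ℝ)+1) * (G (t + 1/((n:ℝ)+1)) - G t))) atTop := by
    intro t ht ε hε
    rcases le_or_gt (η t) ε with hle | hεη
    · have hnp : (η t - ε)/‖w‖ ≤ 0 := div_nonpos_iff.2 (Or.inr ⟨by linarith, hw0.le⟩)
      rw [ENNReal.ofReal_eq_zero.2 hnp]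
      exact zero_le
    obtain ⟨δ₁, hδ₁, hsl⟩ := hslope t ht ε hε hεη
    refine le_liminf_of_le (by isBoundedDefault) ?_
    have hbt : 0 < b - t := by linarith [ht.2]
    have hten : Tendsto (fun n : ℕ => 1/((n:ℝ)+1)) atTop (𝓝 0) :=
      tendsto_one_div_add_atTop_nhds_zero_nat
    have hev1 : ∀ᶠ n : ℕ in atTop, 1/((n:ℝ)+1) ≤ b - t :=
      (hten.eventually (eventually_le_nhds hbt)).mono (fun n hn => hn)
    have hev2 : ∀ᶠ n : ℕ in atTop, (1/((n:ℝ)+1)) * ((η t - ε)/‖w‖) ≤ δ₁ := by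
      have : Tendsto (fun n : ℕ => (1/((n:ℝ)+1)) * ((η t - ε)/‖w‖)) atTop (𝓝 (0 * ((η t - ε)/‖w‖))) :=
        hten.mul_const _
      rw [zero_mul] at this
      exact (this.eventually (eventually_le_nhds hδ₁)).mono (fun n hn => hn)
    filter_upwards [hev1, hev2] with n h1 h2
    set h : ℝ := 1/((n:ℝ)+1) with hh
    have hhpos : 0 < h := by positivity
    have hmem : t + h ∈ Ioc t b := ⟨by linarith, by linarith⟩
    have hsl' := hsl (t + h) hmem
    have hminle : (t + h - t) * (η t - ε) / ‖w‖ ≤ δ₁ := by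
      have : t + h - t = h := by ring
      rw [this, mul_div_assoc]
      exact h2
    rw [min_eq_right hminle] at hsl'
    apply ENNReal.ofReal_le_ofReal
    have hth : t + h - t = h := by ring
    rw [hth, mul_div_assoc] at hsl'
    have hk1 : ((n:ℝ)+1) * h = 1 := by rw [hh]; field_simp
    calc (η t - ε)/‖w‖ = ((n:ℝ)+1) * (h * ((η t - ε)/‖w‖)) := by
          rw [← mul_assoc, hk1, one_mul]
      _ ≤ ((n:ℝ)+1) * (G (t + h) - G t) := by
          apply mul_le_mul_of_nonneg_left hsl' (by positivity)
  have hηintIoo : IntegrableOn η (Ioo a b) := by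
    have h2 := (hint b hb0)
    rw [intervalIntegrable_iff_integrableOn_Ioc_of_le hb0] at h2
    exact h2.mono_set (fun x hx => ⟨ha0.trans_lt hx.1, hx.2.le⟩)
  have hstep3 : ∀ ε : ℝ, 0 < ε → (∫ t in Ioo a b, (η t - ε)/‖w‖) ≤ v - u := by
    intro ε hε
    set ψ : ℝ → ℝ := fun t => (η t - ε)/‖w‖ with hψdef
    have hψint : IntegrableOn ψ (Ioo a b) :=
      (hηintIoo.sub (integrableOn_const measure_Ioo_lt_top.ne)).div_const ‖w‖
    set φ : ℕ → ℝ → ℝ := fun n t => ((n:ℝ)+1) * (G (t + 1/((n:ℝ)+1)) - G t) with hφdef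
    have hφmeas : ∀ n, Measurable (fun t => ENNReal.ofReal (φ n t)) := by
      intro n
      exact (((hGmeas.comp (measurable_id.add_const _)).sub hGmeas).const_mul _).ennreal_ofReal
    have hφnn : ∀ n t, 0 ≤ φ n t := by
      intro n t
      have hGG : G t ≤ G (t + 1/((n:ℝ)+1)) := hGmono (le_add_of_nonneg_right (by positivity))
      have hp : (0:ℝ) < (n:ℝ)+1 := by positivity
      simp only [hφdef]
      exact mul_nonneg hp.le (by linarith)
    have hφint : ∀ n, IntegrableOn (φ n) (Ioo a b) := by
      intro n
      have hsh : IntegrableOn (fun t => G (t + 1/((n:ℝ)+1))) (Ioo a b) :=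
        (((hGmono.comp (monotone_id.add_const _)).monotoneOn _).integrableOn_isCompact
          isCompact_Icc).mono_set Ioo_subset_Icc_self
      exact (hsh.sub hGiOn).const_mul _
    have hchain : ∫⁻ t in Ioo a b, ENNReal.ofReal (ψ t) ≤ ENNReal.ofReal (v - u) := by
      have hmono1 : ∫⁻ t in Ioo a b, ENNReal.ofReal (ψ t)
          ≤ ∫⁻ t in Ioo a b, liminf (fun n : ℕ => ENNReal.ofReal (φ n t)) atTop := by
        refine setLIntegral_mono ?_ ?_
        · exact Measurable.liminf (fun n => hφmeas n)
        · intro t ht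
          exact hstep2 t ht ε hε
      have hmono2 : ∫⁻ t in Ioo a b, liminf (fun n : ℕ => ENNReal.ofReal (φ n t)) atTop
          ≤ liminf (fun n : ℕ => ∫⁻ t in Ioo a b, ENNReal.ofReal (φ n t)) atTop :=
        lintegral_liminf_le (fun n => hφmeas n)
      have hmono3 : liminf (fun n : ℕ => ∫⁻ t in Ioo a b, ENNReal.ofReal (φ n t)) atTop
          ≤ ENNReal.ofReal (v - u) := by
        refine liminf_le_of_frequently_le (Frequently.of_forall ?_) (by isBoundedDefault)
        intro n
        have heq : ∫⁻ t in Ioo a b, ENNReal.ofReal (φ n t) = ENNReal.ofReal (∫ t in Ioo a b, φ n t) :=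
          (ofReal_integral_eq_lintegral_ofReal (hφint n) (ae_of_all _ (fun t => hφnn n t))).symm
        rw [heq]
        apply ENNReal.ofReal_le_ofReal
        have hs1 := hstep1 n
        rw [intervalIntegral.integral_of_le hab.le, integral_Ioc_eq_integral_Ioo] at hs1
        exact hs1
      exact (hmono1.trans hmono2).trans hmono3
    have hψplus : Integrable (fun t => max (ψ t) 0) (volume.restrict (Ioo a b)) := hψint.pos_part
    have hle1 : (∫ t in Ioo a b, ψ t) ≤ ∫ t in Ioo a b, max (ψ t) 0 :=
      integral_mono hψint hψplus (fun t => le_max_left _ _)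
    have heq2 : (∫ t in Ioo a b, max (ψ t) 0)
        = (∫⁻ t in Ioo a b, ENNReal.ofReal (ψ t)).toReal := by
      rw [integral_eq_lintegral_of_nonneg_ae (f := fun t => max (ψ t) 0)
        (μ := volume.restrict (Ioo a b)) (ae_of_all _ (fun t => le_max_right (ψ t) 0))
        hψplus.aestronglyMeasurable]
      congr 1
      apply lintegral_congr
      intro t
      rcases le_total (ψ t) 0 with hn | hp
      · rw [max_eq_right hn, ENNReal.ofReal_eq_zero.2 hn, ENNReal.ofReal_zero]
      · rw [max_eq_left hp]
    have hfin : (∫⁻ t in Ioo a b, ENNReal.ofReal (ψ t)) ≠ ⊤ :=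
      (lt_of_le_of_lt hchain ENNReal.ofReal_lt_top).ne
    have hle3 : (∫⁻ t in Ioo a b, ENNReal.ofReal (ψ t)).toReal ≤ v - u := by
      have := ENNReal.toReal_mono ENNReal.ofReal_ne_top hchain
      rwa [ENNReal.toReal_ofReal (by linarith)] at this
    linarith [hle1.trans (heq2.le.trans hle3)]
  -- pass to the limit ε → 0
  have hioo : (∫ t in Ioo a b, η t) ≤ (v - u) * ‖w‖ := by
    apply le_of_forall_pos_le_add
    intro ε' hε'
    set ε : ℝ := ε' / (b - a) with hεdef
    have hbapos : 0 < b - a := by linarith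
    have hεpos : 0 < ε := by positivity
    have h3 := hstep3 ε hεpos
    have hsplit : (∫ t in Ioo a b, (η t - ε)/‖w‖)
        = ((∫ t in Ioo a b, η t) - ε * (b - a)) / ‖w‖ := by
      rw [integral_div, integral_sub hηintIoo (integrableOn_const measure_Ioo_lt_top.ne)]
      congr 2
      rw [setIntegral_const, Real.volume_real_Ioo_of_le (by linarith), smul_eq_mul,
        mul_comm]
    rw [hsplit, div_le_iff₀ hw0] at h3
    have hεba : ε * (b - a) = ε' := by rw [hεdef]; field_simp
    linarith
  -- conclude
  have hfinal : (∫ t in a..b, η t) ≤ (v - u) * ‖w‖ := by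
    rw [intervalIntegral.integral_of_le hab.le, integral_Ioc_eq_integral_Ioo]
    exact hioo
  have hia : IntervalIntegrable η volume 0 a := hint a ha0
  have hiab : IntervalIntegrable η volume a b := by
    refine (hint b hb0).mono_set ?_
    rw [uIcc_of_le hab.le, uIcc_of_le hb0]
    exact Icc_subset_Icc ha0 le_rfl
  have hadd := intervalIntegral.integral_add_adjacent_intervals hia hiab
  linarith

/-- Gluing two continuous functions on adjacent intervals. -/
lemma glue_Icc {α : Type*} [TopologicalSpace α] {γ₁ γ₂ : ℝ → α} {a b c : ℝ}
    (h₁ : ContinuousOn γ₁ (Icc a b)) (h₂ : ContinuousOn γ₂ (Icc b c))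
    (heq : γ₁ b = γ₂ b) :
    ContinuousOn (fun s => if s ≤ b then γ₁ s else γ₂ s) (Icc a c) := by
  apply ContinuousOn.if
  · intro s hs
    have h1 : s ∈ frontier (Iic b) := hs.2
    rw [frontier_Iic] at h1
    rw [mem_singleton_iff] at h1
    subst h1; exact heq
  · have : Icc a c ∩ closure {s : ℝ | s ≤ b} ⊆ Icc a b := by
      rw [show {s : ℝ | s ≤ b} = Iic b from rfl, closure_Iic]
      exact fun s hs => ⟨hs.1.1, hs.2⟩
    exact h₁.mono this
  · have : Icc a c ∩ closure {s : ℝ | ¬ s ≤ b} ⊆ Icc b c := by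
      rw [show {s : ℝ | ¬ s ≤ b} = Ioi b from by ext s; simp [not_le], closure_Ioi]
      exact fun s hs => ⟨hs.2, hs.1.2⟩
    exact h₂.mono this

/-- L5: existence of lifts of line segments. -/
lemma lift_exists [CompleteSpace E] {f : E → F} (hloc : IsLocalHomeomorph f)
    (hinf : ∀ r : ℝ, 0 ≤ r → ∃ m : ℝ, 0 < m ∧ ∀ x : E, ‖x‖ ≤ r → (m : EReal) ≤ lowerDini f x)
    {η : ℝ → ℝ} (hint : ∀ r : ℝ, 0 ≤ r → IntervalIntegrable η volume 0 r)
    (hdiv : Tendsto (fun r : ℝ => ∫ t in (0:ℝ)..r, η t) atTop atTop)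
    (hη : ∀ t : ℝ, 0 ≤ t → 0 < η t ∧ ∀ x : E, ‖x‖ = t → (η t : EReal) ≤ lowerDini f x)
    (x₀ : E) (w : F) :
    ∃ γ : ℝ → E, ContinuousOn γ (Icc 0 1) ∧ γ 0 = x₀ ∧
      ∀ s ∈ Icc (0:ℝ) 1, f (γ s) = f x₀ + s • w := by
  obtain ⟨R₁, hR₁⟩ := (tendsto_atTop_atTop.mp hdiv) ((∫ t in (0:ℝ)..‖x₀‖, η t) + ‖w‖ + 1)
  set R := max R₁ 0 with hRdef
  have hR0 : 0 ≤ R := le_max_right _ _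
  have hΦR : (∫ t in (0:ℝ)..‖x₀‖, η t) + ‖w‖ + 1 ≤ ∫ t in (0:ℝ)..R, η t :=
    hR₁ R (le_max_left _ _)
  obtain ⟨m, hm, hmR⟩ := hinf R hR0
  set L := ‖w‖ / (m/2) with hLdef
  have hL0 : 0 ≤ L := div_nonneg (norm_nonneg _) (by linarith)
  have hbound : ∀ s, s ∈ Icc (0:ℝ) 1 → ∀ γ : ℝ → E, ContinuousOn γ (Icc 0 s) → γ 0 = x₀ →
      (∀ r ∈ Icc (0:ℝ) s, f (γ r) = f x₀ + r • w) →
      (∀ r ∈ Icc (0:ℝ) s, ‖γ r‖ < R) ∧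
      (∀ p ∈ Icc (0:ℝ) s, ∀ q ∈ Icc (0:ℝ) s, p ≤ q → ‖γ q - γ p‖ ≤ L * (q - p)) := by
    intro s hs γ hγ hγ0 hlift
    have hnorm : ∀ r ∈ Icc (0:ℝ) s, ‖γ r‖ < R := by
      intro r hr
      have hest := estimate_along_lift hloc hint hη hr.1
        (hγ.mono (Icc_subset_Icc le_rfl hr.2)) (c := f x₀) (w := w)
        (fun p hp => hlift p ⟨hp.1, hp.2.trans hr.2⟩)
      rw [hγ0] at hest
      by_contra hcon
      push_neg at hcon
      have hmono := phi_mono hint (fun t ht => (hη t ht).1) hR0 hcon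
      have hr1 : r ≤ 1 := hr.2.trans hs.2
      nlinarith [norm_nonneg w, hr.1]
    refine ⟨hnorm, ?_⟩
    intro p hp q hq hpq
    refine lift_lipschitz hγ hlift (by linarith : (0:ℝ) < m/2) ?_ p hp q hq hpq
    intro r hr
    exact lowerDini_bound (hmR (γ r) (hnorm r hr).le) (by linarith : m/2 < m)
  set A := {s : ℝ | s ∈ Icc (0:ℝ) 1 ∧ ∃ γ : ℝ → E, ContinuousOn γ (Icc 0 s) ∧ γ 0 = x₀ ∧
      ∀ r ∈ Icc (0:ℝ) s, f (γ r) = f x₀ + r • w} with hAdef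
  have h0A : (0:ℝ) ∈ A := by
    refine ⟨⟨le_rfl, zero_le_one⟩, fun _ => x₀, continuousOn_const, rfl, fun r hr => ?_⟩
    have : r = 0 := le_antisymm hr.2 hr.1
    simp [this]
  have hAne : A.Nonempty := ⟨0, h0A⟩
  have hAbdd : BddAbove A := ⟨1, fun s hs => hs.1.2⟩
  set c := sSup A with hcdef
  have hc0 : 0 ≤ c := le_csSup hAbdd h0A
  have hc1 : c ≤ 1 := csSup_le hAne (fun s hs => hs.1.2)
  have hex : ∀ n : ℕ, ∃ s, s ∈ A ∧ c - 1/((n:ℝ)+1) < s := by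
    intro n
    have hpos : (0:ℝ) < 1/((n:ℝ)+1) := by positivity
    obtain ⟨s, hsA, hlt⟩ := exists_lt_of_lt_csSup hAne (by linarith : c - 1/((n:ℝ)+1) < sSup A)
    exact ⟨s, hsA, hlt⟩
  choose sq hsqA hsqlt using hex
  have hsqle : ∀ n, sq n ≤ c := fun n => le_csSup hAbdd (hsqA n)
  choose γq hγqc hγq0 hγqlift using (fun n => (hsqA n).2)
  have hsq01 : ∀ n, sq n ∈ Icc (0:ℝ) 1 := fun n => (hsqA n).1
  have hcoh : ∀ n k : ℕ, sq n ≤ sq k → γq k (sq n) = γq n (sq n) := by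
    intro n k hnk
    have he := lift_unique hloc (σ := fun r => f x₀ + r • w)
      ((hγqc k).mono (Icc_subset_Icc le_rfl hnk)) (hγqc n)
      (fun r hr => hγqlift k r ⟨hr.1, hr.2.trans hnk⟩) (hγqlift n)
      (s₀ := 0) ⟨le_rfl, (hsq01 n).1⟩ (by rw [hγq0 k, hγq0 n])
    exact he ⟨(hsq01 n).1, le_rfl⟩
  set xq : ℕ → E := fun n => γq n (sq n) with hxqdef
  have hdistq : ∀ n k, sq n ≤ sq k → ‖xq k - xq n‖ ≤ L * (sq k - sq n) := by
    intro n k hnk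
    have hb := (hbound (sq k) (hsq01 k) (γq k) (hγqc k) (hγq0 k) (hγqlift k)).2
      (sq n) ⟨(hsq01 n).1, hnk⟩ (sq k) ⟨(hsq01 k).1, le_rfl⟩ hnk
    rw [hcoh n k hnk] at hb
    exact hb
  have hdist : ∀ n k : ℕ, ‖xq k - xq n‖ ≤ L * |sq k - sq n| := by
    intro n k
    rcases le_total (sq n) (sq k) with h | h
    · rw [abs_of_nonneg (by linarith)]; exact hdistq n k h
    · rw [abs_of_nonpos (by linarith)]
      have h2 := hdistq k n h
      rw [← norm_neg, neg_sub] at h2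
      rw [neg_sub]
      exact h2
  have hgap : ∀ n k : ℕ, k ≤ n → |sq n - sq k| ≤ 1/((k:ℝ)+1) := by
    intro n k hkn
    have ha := hsqlt n; have hb := hsqlt k
    have h1n : 1/((n:ℝ)+1) ≤ 1/((k:ℝ)+1) := by
      apply one_div_le_one_div_of_le (by positivity)
      have : (k:ℝ) ≤ (n:ℝ) := by exact_mod_cast hkn
      linarith
    rw [abs_le]
    constructor <;> nlinarith [hsqle n, hsqle k]
  have hcauchy : CauchySeq xq := by
    rw [Metric.cauchySeq_iff']
    intro ε hε
    obtain ⟨N, hN⟩ := exists_nat_gt ((L + 1)/ε)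
    have hNpos : (0:ℝ) < (N:ℝ) + 1 := by positivity
    refine ⟨N, fun n hn => ?_⟩
    calc dist (xq n) (xq N) = ‖xq n - xq N‖ := dist_eq_norm _ _
      _ ≤ L * |sq n - sq N| := hdist N n
      _ ≤ L * (1/((N:ℝ)+1)) := mul_le_mul_of_nonneg_left (hgap n N hn) hL0
      _ < ε := by
          rw [mul_one_div, div_lt_iff₀ hNpos]
          have h2 : (L+1)/ε < (N:ℝ) + 1 := by linarith
          rw [div_lt_iff₀ hε] at h2
          nlinarith
  obtain ⟨z, hz⟩ := cauchySeq_tendsto_of_complete hcauchy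
  have hsqc : Tendsto sq atTop (𝓝 c) := by
    have hlow : Tendsto (fun n : ℕ => c - 1/((n:ℝ)+1)) atTop (𝓝 (c - 0)) :=
      tendsto_const_nhds.sub tendsto_one_div_add_atTop_nhds_zero_nat
    rw [sub_zero] at hlow
    exact tendsto_of_tendsto_of_tendsto_of_le_of_le hlow tendsto_const_nhds
      (fun n => (hsqlt n).le) (fun n => hsqle n)
  have hfz : f z = f x₀ + c • w := by
    have h1 : Tendsto (fun n => f (xq n)) atTop (𝓝 (f z)) := (hloc.continuous.tendsto z).comp hz
    have h2 : (fun n => f (xq n)) = fun n => f x₀ + (sq n) • w :=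
      funext fun n => hγqlift n (sq n) ⟨(hsq01 n).1, le_rfl⟩
    rw [h2] at h1
    have h3 : Tendsto (fun n => f x₀ + (sq n) • w) atTop (𝓝 (f x₀ + c • w)) :=
      tendsto_const_nhds.add (hsqc.smul_const w)
    exact tendsto_nhds_unique h1 h3
  obtain ⟨e, hze, hfe⟩ := hloc z
  obtain ⟨ρ, hρ, hballe⟩ := Metric.isOpen_iff.mp e.open_source z hze
  have hσcont : Continuous (fun s : ℝ => f x₀ + s • w) :=
    continuous_const.add (continuous_id.smul continuous_const)
  have htmem : f x₀ + c • w ∈ e.target := by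
    rw [← hfz, congrFun hfe z]
    exact e.map_source hze
  have hnt : (fun s : ℝ => f x₀ + s • w) ⁻¹' e.target ∈ 𝓝 c :=
    hσcont.continuousAt.preimage_mem_nhds (e.open_target.mem_nhds htmem)
  obtain ⟨δ₂, hδ₂, hδ₂sub⟩ := Metric.mem_nhds_iff.mp hnt
  -- choose a good index N
  have htends : Tendsto (fun n : ℕ => 1/((n:ℝ)+1)) atTop (𝓝 0) :=
    tendsto_one_div_add_atTop_nhds_zero_nat
  have hev1 : ∀ᶠ n : ℕ in atTop, 1/((n:ℝ)+1) < δ₂/2 :=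
    htends.eventually (eventually_lt_nhds (by linarith))
  have hev2 : ∀ᶠ n : ℕ in atTop, xq n ∈ Metric.ball z ρ := hz (Metric.ball_mem_nhds z hρ)
  obtain ⟨N, hN1, hN2⟩ := (hev1.and hev2).exists
  set b' := min 1 (c + δ₂/2) with hb'def
  have hcb' : c ≤ b' := le_min hc1 (by linarith)
  have hsqNc : c - δ₂/2 < sq N := by
    have := hsqlt N
    linarith
  have hmemtgt : ∀ r, sq N ≤ r → r ≤ b' → f x₀ + r • w ∈ e.target := by
    intro r h1 h2
    apply hδ₂sub
    rw [Metric.mem_ball, Real.dist_eq]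
    have ha2 : r ≤ c + δ₂/2 := h2.trans (min_le_right _ _)
    have ha3 : c - δ₂/2 < r := lt_of_lt_of_le hsqNc h1
    rw [abs_lt]
    constructor <;> linarith
  have hxqN : xq N ∈ e.source := hballe hN2
  have hjunc : γq N (sq N) = e.symm (f x₀ + (sq N) • w) := by
    have hfxq : f (xq N) = f x₀ + (sq N) • w := hγqlift N (sq N) ⟨(hsq01 N).1, le_rfl⟩
    rw [← hfxq, show f (xq N) = e (xq N) from congrFun hfe (xq N)]
    exact (e.left_inv hxqN).symm
  set γ' : ℝ → E := fun r => if r ≤ sq N then γq N r else e.symm (f x₀ + r • w) with hγ'def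
  have hγ'cont : ContinuousOn γ' (Icc 0 b') := by
    refine glue_Icc (hγqc N) ?_ hjunc
    refine e.continuousOn_symm.comp hσcont.continuousOn ?_
    intro r hr
    exact hmemtgt r hr.1 hr.2
  have hγ'0 : γ' 0 = x₀ := by
    simp only [hγ'def, if_pos (hsq01 N).1]
    exact hγq0 N
  have hγ'lift : ∀ r ∈ Icc (0:ℝ) b', f (γ' r) = f x₀ + r • w := by
    intro r hr
    by_cases h : r ≤ sq N
    · simp only [hγ'def, if_pos h]
      exact hγqlift N r ⟨hr.1, h⟩
    · push_neg at h
      simp only [hγ'def, if_neg (not_le.2 h)]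
      have hmem := hmemtgt r h.le hr.2
      rw [show f (e.symm (f x₀ + r • w)) = e (e.symm (f x₀ + r • w)) from congrFun hfe _]
      exact e.right_inv hmem
  have hb'A : b' ∈ A := ⟨⟨le_trans hc0 hcb', min_le_left _ _⟩, γ', hγ'cont, hγ'0, hγ'lift⟩
  have hb'c : b' ≤ c := le_csSup hAbdd hb'A
  have hceq : c = 1 := by
    by_contra hne
    have hlt : c < 1 := lt_of_le_of_ne hc1 hne
    have : c < b' := lt_min hlt (by linarith)
    linarith
  have hb'1 : b' = 1 := le_antisymm (min_le_left _ _) (by rw [hb'def, hceq]; exact le_min le_rfl (by linarith))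
  exact ⟨γ', by rw [← hb'1]; exact hγ'cont, hγ'0, by rw [← hb'1]; exact hγ'lift⟩

/-- L6: continuity of the endpoint map (monodromy along the affine family of segments). -/
lemma endpoint_continuous [CompleteSpace E] {f : E → F} (hloc : IsLocalHomeomorph f)
    {g : F → E}
    (hg : ∀ y : F, ∃ γ : ℝ → E, ContinuousOn γ (Icc 0 1) ∧ γ 0 = 0 ∧
      (∀ s ∈ Icc (0:ℝ) 1, f (γ s) = f 0 + s • (y - f 0)) ∧ γ 1 = g y) :
    Continuous g := by
  rw [continuous_iff_continuousAt]
  intro y₀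
  obtain ⟨γ₀, hγ₀c, hγ₀0, hγ₀lift, hγ₀end⟩ := hg y₀
  set cl : ℝ → ℝ := fun s => max 0 (min 1 s) with hcldef
  have hclcont : Continuous cl := continuous_const.max (continuous_const.min continuous_id)
  have hclmem : ∀ s, cl s ∈ Icc (0:ℝ) 1 := fun s =>
    ⟨le_max_left _ _, max_le (by norm_num) (min_le_left _ _)⟩
  have hcleq : ∀ s ∈ Icc (0:ℝ) 1, cl s = s := by
    intro s hs
    simp only [hcldef]
    rw [min_eq_right hs.2, max_eq_right hs.1]
  set γb : ℝ → E := fun s => γ₀ (cl s) with hγbdef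
  have hγbcont : Continuous γb := hγ₀c.comp_continuous hclcont hclmem
  have hγbeq : ∀ s ∈ Icc (0:ℝ) 1, γb s = γ₀ s := fun s hs => by
    simp only [hγbdef]; rw [hcleq s hs]
  have hσfc : Continuous (fun p : ℝ × F => f 0 + p.1 • (p.2 - f 0)) :=
    continuous_const.add (continuous_fst.smul (continuous_snd.sub continuous_const))
  have hloc' := hloc
  choose eX heXmem heXeq using hloc'
  have hcov : Icc (0:ℝ) 1 ⊆ ⋃ s : ℝ, γb ⁻¹' (eX (γb s)).source := by
    intro s _
    exact mem_iUnion.2 ⟨s, heXmem (γb s)⟩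
  obtain ⟨δ, hδ, hleb⟩ := lebesgue_number_lemma_of_metric isCompact_Icc
    (fun s => (eX (γb s)).open_source.preimage hγbcont) hcov
  obtain ⟨n, hn⟩ := exists_nat_gt (1/δ)
  have hn1 : (0:ℝ) < (n:ℝ) + 1 := by positivity
  have hδn : 1/((n:ℝ)+1) < δ := by
    rw [div_lt_iff₀ hn1]
    rw [div_lt_iff₀ hδ] at hn
    nlinarith
  set a : ℕ → ℝ := fun i => (i:ℝ)/((n:ℝ)+1) with hadef
  have ha0 : a 0 = 0 := by simp [hadef]
  have han1 : a (n+1) = 1 := by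
    simp only [hadef]
    push_cast
    field_simp
  have hamono : ∀ i j : ℕ, i ≤ j → a i ≤ a j := by
    intro i j hij
    simp only [hadef]
    rw [div_le_div_iff₀ hn1 hn1]
    have hcast : (i:ℝ) ≤ (j:ℝ) := by exact_mod_cast hij
    nlinarith
  have grid0 : ∀ i, 0 ≤ a i := fun i => by simp only [hadef]; positivity
  have hgrid1 : ∀ i : ℕ, i ≤ n+1 → a i ≤ 1 := by
    intro i hi
    rw [← han1]
    exact hamono i (n+1) hi
  have hstep : ∀ i : ℕ, a i < a (i+1) := by
    intro i
    simp only [hadef]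
    rw [div_lt_div_iff₀ hn1 hn1]
    have hcast : (i:ℝ) < (i:ℝ) + 1 := by linarith
    push_cast
    nlinarith
  have hstepeq : ∀ i : ℕ, a (i+1) - a i = 1/((n:ℝ)+1) := by
    intro i
    simp only [hadef]
    push_cast
    field_simp
    ring
  have hcov2 : ∀ i : ℕ, i ≤ n → ∃ U : OpenPartialHomeomorph E F, f = U ∧
      ∀ s ∈ Icc (a i) (a (i+1)), γb s ∈ U.source := by
    intro i hi
    obtain ⟨p, hp⟩ := hleb (a i) ⟨grid0 i, hgrid1 i (hi.trans (Nat.le_succ n))⟩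
    refine ⟨eX (γb p), heXeq _, fun s hs => hp ?_⟩
    rw [Metric.mem_ball, Real.dist_eq, abs_of_nonneg (by linarith [hs.1])]
    have h2 : s - a i ≤ 1/((n:ℝ)+1) := by
      have := hs.2
      linarith [hstepeq i]
    linarith
  choose eU heUf heUmem using hcov2
  have hIccsub : ∀ i : ℕ, i ≤ n → Icc (a i) (a (i+1)) ⊆ Icc (0:ℝ) 1 := by
    intro i hi s hs
    exact ⟨(grid0 i).trans hs.1, hs.2.trans (hgrid1 (i+1) (Nat.succ_le_succ hi))⟩
  have main : ∀ i : ℕ, i ≤ n + 1 → ∃ ρ > 0, ∃ φ : F → E, ContinuousAt φ y₀ ∧ φ y₀ = γb (a i) ∧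
      ∀ y : F, dist y y₀ < ρ → ∃ γ : ℝ → E, ContinuousOn γ (Icc 0 (a i)) ∧ γ 0 = 0 ∧
        (∀ s ∈ Icc (0:ℝ) (a i), f (γ s) = f 0 + s • (y - f 0)) ∧ γ (a i) = φ y := by
    intro i
    induction i with
    | zero =>
      intro _
      refine ⟨1, one_pos, fun _ => 0, continuousAt_const, ?_, ?_⟩
      · rw [ha0, hγbeq 0 ⟨le_rfl, zero_le_one⟩, hγ₀0]
      · intro y _
        refine ⟨fun _ => 0, continuousOn_const, rfl, ?_, by rw [ha0]⟩
        intro s hs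
        rw [ha0] at hs
        have hs0 : s = 0 := le_antisymm hs.2 hs.1
        subst hs0
        simp
    | succ i ih =>
      intro hi1
      have hin : i ≤ n := Nat.succ_le_succ_iff.mp hi1
      obtain ⟨ρ, hρ, φ, hφc, hφ0, hφlift⟩ := ih (le_trans (Nat.le_succ i) hi1)
      have hsrc : ∀ s ∈ Icc (a i) (a (i+1)), γb s ∈ (eU i hin).source := heUmem i hin
      have hfeU : f = eU i hin := heUf i hin
      have haimem : a i ∈ Icc (a i) (a (i+1)) := ⟨le_rfl, (hstep i).le⟩
      have hai1mem : a (i+1) ∈ Icc (a i) (a (i+1)) := ⟨(hstep i).le, le_rfl⟩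
      have htgt0 : ∀ s ∈ Icc (a i) (a (i+1)), f 0 + s • (y₀ - f 0) ∈ (eU i hin).target := by
        intro s hs
        have h1 : f (γb s) = f 0 + s • (y₀ - f 0) := by
          rw [hγbeq s (hIccsub i hin hs)]
          exact hγ₀lift s (hIccsub i hin hs)
        rw [← h1, congrFun hfeU (γb s)]
        exact (eU i hin).map_source (hsrc s hs)
      obtain ⟨t₁, t₂, hot1, hot2, hsub1, hsub2, htube⟩ := generalized_tube_lemma
        (isCompact_Icc : IsCompact (Icc (a i) (a (i+1)))) isCompact_singleton
        ((eU i hin).open_target.preimage hσfc)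
        (by
          rintro ⟨s, y⟩ ⟨hs, hy⟩
          rw [mem_singleton_iff] at hy
          subst hy
          exact htgt0 s hs)
      obtain ⟨ρb, hρb, hballt2⟩ := Metric.isOpen_iff.mp hot2 y₀ (hsub2 rfl)
      have hφsrc : ∀ᶠ y in 𝓝 y₀, φ y ∈ (eU i hin).source := by
        apply hφc.eventually_mem ((eU i hin).open_source.mem_nhds ?_)
        rw [hφ0]
        exact hsrc (a i) haimem
      obtain ⟨ρa, hρa, hρasub⟩ := Metric.eventually_nhds_iff_ball.mp hφsrc
      refine ⟨min ρ (min ρa ρb), lt_min hρ (lt_min hρa hρb),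
        fun y => (eU i hin).symm (f 0 + (a (i+1)) • (y - f 0)), ?_, ?_, ?_⟩
      · have hmem : f 0 + (a (i+1)) • (y₀ - f 0) ∈ (eU i hin).target := htgt0 _ hai1mem
        have hc1 : ContinuousAt (eU i hin).symm (f 0 + (a (i+1)) • (y₀ - f 0)) :=
          (eU i hin).symm.continuousAt (by
            rw [OpenPartialHomeomorph.symm_source]
            exact hmem)
        have hc2 : ContinuousAt (fun y : F => f 0 + (a (i+1)) • (y - f 0)) y₀ := by fun_prop
        exact ContinuousAt.comp (g := ((eU i hin).symm : F → E))
          (f := fun y : F => f 0 + (a (i+1)) • (y - f 0)) (x := y₀) hc1 hc2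
      · have hmem : γb (a (i+1)) ∈ (eU i hin).source := hsrc _ hai1mem
        have h1 : f (γb (a (i+1))) = f 0 + (a (i+1)) • (y₀ - f 0) := by
          rw [hγbeq _ (hIccsub i hin hai1mem)]
          exact hγ₀lift _ (hIccsub i hin hai1mem)
        show (eU i hin).symm (f 0 + (a (i+1)) • (y₀ - f 0)) = γb (a (i+1))
        rw [← h1, congrFun hfeU (γb (a (i+1)))]
        exact (eU i hin).left_inv hmem
      · intro y hy
        have hyρ : dist y y₀ < ρ := lt_of_lt_of_le hy (min_le_left _ _)
        have hyρa : dist y y₀ < ρa := lt_of_lt_of_le hy ((min_le_right _ _).trans (min_le_left _ _))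
        have hyρb : dist y y₀ < ρb := lt_of_lt_of_le hy ((min_le_right _ _).trans (min_le_right _ _))
        obtain ⟨γy, hγyc, hγy0, hγylift, hγyend⟩ := hφlift y hyρ
        have hymem : ∀ s ∈ Icc (a i) (a (i+1)), f 0 + s • (y - f 0) ∈ (eU i hin).target := by
          intro s hs
          exact htube (Set.mk_mem_prod (hsub1 hs) (hballt2 (Metric.mem_ball.mpr hyρb)))
        have hφysrc : φ y ∈ (eU i hin).source := hρasub y (Metric.mem_ball.mpr hyρa)
        have hjunc : γy (a i) = (eU i hin).symm (f 0 + (a i) • (y - f 0)) := by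
          have hfφ : f (φ y) = f 0 + (a i) • (y - f 0) := by
            rw [← hγyend]
            exact hγylift (a i) ⟨grid0 i, le_rfl⟩
          rw [hγyend, ← hfφ, congrFun hfeU (φ y)]
          exact ((eU i hin).left_inv hφysrc).symm
        refine ⟨fun s => if s ≤ a i then γy s else (eU i hin).symm (f 0 + s • (y - f 0)),
          ?_, ?_, ?_, ?_⟩
        · refine glue_Icc hγyc ?_ hjunc
          refine ((eU i hin).continuousOn_symm.comp
            ((hσfc.comp (continuous_id.prodMk continuous_const)).continuousOn) ?_)
          intro s hs
          exact hymem s hs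
        · beta_reduce
          rw [if_pos (grid0 i)]
          exact hγy0
        · intro s hs
          beta_reduce
          by_cases h : s ≤ a i
          · rw [if_pos h]
            exact hγylift s ⟨hs.1, h⟩
          · push_neg at h
            rw [if_neg (not_le.2 h)]
            have hmem := hymem s ⟨h.le, hs.2⟩
            rw [congrFun hfeU ((eU i hin).symm (f 0 + s • (y - f 0)))]
            exact (eU i hin).right_inv hmem
        · beta_reduce
          rw [if_neg (not_le.2 (hstep i))]
  obtain ⟨ρ, hρ, φ, hφc, hφ0, hφlift⟩ := main (n+1) le_rfl
  have heqg : ∀ᶠ y in 𝓝 y₀, g y = φ y := by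
    filter_upwards [Metric.ball_mem_nhds y₀ hρ] with y hy
    obtain ⟨γy, hγyc, hγy0, hγylift, hγyend⟩ := hφlift y (Metric.mem_ball.mp hy)
    obtain ⟨γg, hγgc, hγg0, hγglift, hγgend⟩ := hg y
    rw [han1] at hγyc hγylift hγyend
    have huniq := lift_unique hloc (σ := fun s => f 0 + s • (y - f 0)) hγgc hγyc hγglift hγylift
      (s₀ := 0) ⟨le_rfl, zero_le_one⟩ (by rw [hγg0, hγy0])
    rw [← hγgend, ← hγyend]
    exact huniq ⟨zero_le_one, le_rfl⟩
  exact hφc.congr (heqg.mono fun y hy => hy.symm)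

end Aux

theorem global_inversion_integral_condition
    {E F : Type*} [NormedAddCommGroup E] [NormedSpace ℝ E] [CompleteSpace E]
    [NormedAddCommGroup F] [NormedSpace ℝ F] [CompleteSpace F]
    (f : E → F) (hloc : IsLocalHomeomorph f)
    (hinf : ∀ r : ℝ, 0 ≤ r → ∃ m : ℝ, 0 < m ∧ ∀ x : E, ‖x‖ ≤ r → (m : EReal) ≤ lowerDini f x)
    (η : ℝ → ℝ)
    (hint : ∀ r : ℝ, 0 ≤ r → IntervalIntegrable η MeasureTheory.volume 0 r)
    (hdiv : Filter.Tendsto (fun r : ℝ => ∫ t in (0:ℝ)..r, η t) Filter.atTop Filter.atTop)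
    (hη : ∀ t : ℝ, 0 ≤ t → 0 < η t ∧ ∀ x : E, ‖x‖ = t → (η t : EReal) ≤ lowerDini f x) :
    IsHomeomorph f ∧ ∀ x : E, (∫ t in (0:ℝ)..‖x‖, η t) ≤ ‖f x - f 0‖ := by
  have hlifts : ∀ y : F, ∃ γ : ℝ → E, ContinuousOn γ (Icc 0 1) ∧ γ 0 = 0 ∧
      ∀ s ∈ Icc (0:ℝ) 1, f (γ s) = f 0 + s • (y - f 0) :=
    fun y => lift_exists hloc hinf hint hdiv hη 0 (y - f 0)
  choose Γ hΓc hΓ0 hΓlift using hlifts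
  set g : F → E := fun y => Γ y 1 with hgdef
  have hfg : ∀ y, f (g y) = y := by
    intro y
    have h1 := hΓlift y 1 ⟨zero_le_one, le_rfl⟩
    simp only [hgdef]
    rw [h1, one_smul]
    abel
  have hgcont : Continuous g :=
    endpoint_continuous hloc (fun y => ⟨Γ y, hΓc y, hΓ0 y, hΓlift y, rfl⟩)
  have hW : ∀ x : E, g (f x) = x := by
    set W := {x : E | g (f x) = x} with hWdef
    have hWclosed : IsClosed W := isClosed_eq (hgcont.comp hloc.continuous) continuous_id
    have hWopen : IsOpen W := by
      rw [isOpen_iff_mem_nhds]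
      intro x hx
      obtain ⟨e, hxe, hfe⟩ := hloc x
      have hc : ContinuousAt (fun x' => g (f x')) x :=
        (hgcont.comp hloc.continuous).continuousAt
      have hmem : g (f x) ∈ e.source := by
        rw [show g (f x) = x from hx]
        exact hxe
      have h1 : ∀ᶠ x' in 𝓝 x, g (f x') ∈ e.source :=
        hc.eventually_mem (e.open_source.mem_nhds hmem)
      have h2 : ∀ᶠ x' in 𝓝 x, x' ∈ e.source := e.open_source.mem_nhds hxe
      filter_upwards [h1, h2] with x' hx1 hx2
      have hfeq : f (g (f x')) = f x' := hfg (f x')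
      exact e.injOn hx1 hx2 (by rw [← congrFun hfe (g (f x')), ← congrFun hfe x']; exact hfeq)
    have h0W : (0:E) ∈ W := by
      have hcon : ∀ s ∈ Icc (0:ℝ) 1, f ((fun _ => (0:E)) s) = f 0 + s • (f 0 - f 0) := by
        intro s _
        simp
      have huniq := lift_unique hloc (σ := fun s => f 0 + s • (f 0 - f 0))
        (hΓc (f 0)) continuousOn_const (hΓlift (f 0)) hcon
        (s₀ := 0) ⟨le_rfl, zero_le_one⟩ (by rw [hΓ0 (f 0)])
      have := huniq ⟨zero_le_one, le_rfl⟩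
      simpa [hWdef, hgdef] using this
    have hWuniv : W = univ := IsClopen.eq_univ ⟨hWclosed, hWopen⟩ ⟨0, h0W⟩
    intro x
    have : x ∈ W := hWuniv ▸ mem_univ x
    exact this
  have hinj : Function.Injective f := fun a b hab => by
    rw [← hW a, hab, hW b]
  have hsurj : Function.Surjective f := fun y => ⟨g y, hfg y⟩
  refine ⟨⟨hloc.continuous, hloc.isOpenMap, hinj, hsurj⟩, ?_⟩
  intro x
  have hest := estimate_along_lift hloc hint hη (zero_le_one)
    (hΓc (f x)) (c := f 0) (w := f x - f 0) (hΓlift (f x))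
  have he1 : Γ (f x) 1 = x := hW x
  have he0 : Γ (f x) 0 = 0 := hΓ0 (f x)
  rw [he1, he0] at hest
  simpa using hest
end

section
/- For every β ≥ 0, the 2×2 matrix A_β = [[1, −1], [1, β]] is invertible, and its inverse satisfies ‖A_β⁻¹‖ ≤ 2√2 in the operator norm; consequently //A_β// ≥ 1/(2√2), uniformly in β ≥ 0. -/
theorem matrix_family_equi_invertible (β : ℝ) (hβ : 0 ≤ β) :
    Function.Bijective
      (Matrix.toEuclideanCLM (𝕜 := ℝ) !![1, -1; 1, β]) ∧
    (∀ B : EuclideanSpace ℝ (Fin 2) →L[ℝ] EuclideanSpace ℝ (Fin 2),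
      (Matrix.toEuclideanCLM (𝕜 := ℝ) !![1, -1; 1, β]).comp B = ContinuousLinearMap.id ℝ _ →
      B.comp (Matrix.toEuclideanCLM (𝕜 := ℝ) !![1, -1; 1, β]) = ContinuousLinearMap.id ℝ _ →
      ‖B‖ ≤ 2 * Real.sqrt 2) ∧
    conorm (Matrix.toEuclideanCLM (𝕜 := ℝ) !![1, -1; 1, β]) ≥ 1 / (2 * Real.sqrt 2) := by
  have hβ1 : (0:ℝ) < 1 + β := by linarith
  set M : Matrix (Fin 2) (Fin 2) ℝ := !![1, -1; 1, β] with hM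
  set N : Matrix (Fin 2) (Fin 2) ℝ := (1/(1+β)) • !![β, 1; -1, 1] with hN
  have hMN : M * N = 1 := by
    rw [hM, hN, Matrix.mul_smul]
    ext i j
    fin_cases i <;> fin_cases j <;>
      simp [Matrix.mul_apply, Fin.sum_univ_two, Matrix.one_apply] <;>
      field_simp <;> ring
  have hNM : N * M = 1 := by
    rw [hM, hN, Matrix.smul_mul]
    ext i j
    fin_cases i <;> fin_cases j <;>
      simp [Matrix.mul_apply, Fin.sum_univ_two, Matrix.one_apply] <;>
      field_simp <;> ring
  set A := Matrix.toEuclideanCLM (𝕜 := ℝ) M with hA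
  set B₀ := Matrix.toEuclideanCLM (𝕜 := ℝ) N with hB₀
  have hAB : A * B₀ = 1 := by rw [hA, hB₀, ← map_mul, hMN, map_one]
  have hBA : B₀ * A = 1 := by rw [hA, hB₀, ← map_mul, hNM, map_one]
  have hli : Function.LeftInverse B₀ A := fun x => by
    have := congrFun (congrArg DFunLike.coe hBA) x
    simpa using this
  have hri : Function.RightInverse B₀ A := fun x => by
    have := congrFun (congrArg DFunLike.coe hAB) x
    simpa using this
  -- norm bound for B₀
  have hsqrt2 : (0:ℝ) < Real.sqrt 2 := Real.sqrt_pos.mpr (by norm_num)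
  have hnormB₀ : ‖B₀‖ ≤ 2 * Real.sqrt 2 := by
    apply ContinuousLinearMap.opNorm_le_bound _ (by positivity)
    intro x
    have hx0 : WithLp.equiv 2 (Fin 2 → ℝ) (B₀ x) = N.mulVec (WithLp.equiv 2 (Fin 2 → ℝ) x) :=
      Matrix.ofLp_toEuclideanCLM N x
    have key : ∀ i, (B₀ x) i = N.mulVec (fun j => x j) i := by
      intro i
      have := congrFun hx0 i
      simpa using this
    have h2 : ‖B₀ x‖ = Real.sqrt ((B₀ x 0)^2 + (B₀ x 1)^2) := by
      rw [EuclideanSpace.norm_eq]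
      simp [Fin.sum_univ_two, sq_abs, sq]
    have h3 : ‖x‖ = Real.sqrt ((x 0)^2 + (x 1)^2) := by
      rw [EuclideanSpace.norm_eq]
      simp [Fin.sum_univ_two, sq_abs, sq]
    rw [h2, h3]
    have e0 : (B₀ x) 0 = (1/(1+β)) * (β * x 0 + x 1) := by
      rw [key 0, hN]
      simp [Matrix.mulVec, dotProduct, Fin.sum_univ_two]
      ring
    have e1 : (B₀ x) 1 = (1/(1+β)) * (-(x 0) + x 1) := by
      rw [key 1, hN]
      simp [Matrix.mulVec, dotProduct, Fin.sum_univ_two]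
      ring
    have hbd : (B₀ x 0)^2 + (B₀ x 1)^2 ≤ 8 * ((x 0)^2 + (x 1)^2) := by
      rw [e0, e1]
      rw [mul_pow, mul_pow, ← mul_add, div_pow, one_pow, div_mul_eq_mul_div,
        div_le_iff₀ (by positivity)]
      nlinarith [sq_nonneg (x 0 - x 1), sq_nonneg (β * x 0 - x 1), sq_nonneg (x 0 + x 1),
        mul_nonneg hβ (sq_nonneg (x 0)), mul_nonneg hβ (sq_nonneg (x 1)),
        mul_nonneg (mul_nonneg hβ hβ) (sq_nonneg (x 0)),
        mul_nonneg (mul_nonneg hβ hβ) (sq_nonneg (x 1)),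
        mul_nonneg hβ (sq_nonneg (x 0 - x 1)), mul_nonneg hβ (sq_nonneg (x 0 + x 1)),
        mul_nonneg (mul_nonneg hβ hβ) (sq_nonneg (x 0 - x 1))]
    calc Real.sqrt ((B₀ x 0)^2 + (B₀ x 1)^2)
        ≤ Real.sqrt (8 * ((x 0)^2 + (x 1)^2)) := Real.sqrt_le_sqrt hbd
      _ = Real.sqrt 8 * Real.sqrt ((x 0)^2 + (x 1)^2) := Real.sqrt_mul (by norm_num) _
      _ = 2 * Real.sqrt 2 * Real.sqrt ((x 0)^2 + (x 1)^2) := by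
          rw [show (8:ℝ) = 2^2 * 2 by norm_num, Real.sqrt_mul (by positivity),
            Real.sqrt_sq (by norm_num)]
  refine ⟨⟨hli.injective, hri.surjective⟩, ?_, ?_⟩
  · intro B h1 h2
    have hid : A.comp B₀ = ContinuousLinearMap.id ℝ _ := by
      rw [← ContinuousLinearMap.one_def]; exact hAB
    have hBeq : B = B₀ := by
      calc B = B.comp (ContinuousLinearMap.id ℝ _) := by ext y; simp
        _ = B.comp (A.comp B₀) := by rw [hid]
        _ = (B.comp A).comp B₀ := by rw [ContinuousLinearMap.comp_assoc]
        _ = B₀ := by rw [h2]; ext y; simp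
    rw [hBeq]; exact hnormB₀
  · unfold conorm
    apply le_csInf
    · refine ⟨‖A (EuclideanSpace.single 0 1)‖, ⟨EuclideanSpace.single 0 1, ?_, rfl⟩⟩
      simp [EuclideanSpace.norm_single]
    · rintro b ⟨u, hu, rfl⟩
      simp only [Set.mem_setOf_eq] at hu
      have h1 : (1:ℝ) = ‖B₀ (A u)‖ := by rw [hli u, hu]
      have h2 : ‖B₀ (A u)‖ ≤ ‖B₀‖ * ‖A u‖ := B₀.le_opNorm _
      have h3 : ‖B₀‖ * ‖A u‖ ≤ (2 * Real.sqrt 2) * ‖A u‖ :=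
        mul_le_mul_of_nonneg_right hnormB₀ (norm_nonneg _)
      show 1 / (2 * Real.sqrt 2) ≤ ‖A u‖
      rw [div_le_iff₀ (by positivity)]
      calc (1:ℝ) ≤ (2 * Real.sqrt 2) * ‖A u‖ := by linarith
        _ = ‖A u‖ * (2 * Real.sqrt 2) := by ring
end
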